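/- arXiv:1207.5178 — 5 statements merged into one kernel-verified Lean document; each statement's English description precedes it below -/
import Mathlib

section
/- For α, β > 0 and f a measurable function on (0,∞) for which all integrals converge absolutely, the weighted composition identity I^α_-( t^{-α-β} · I^β_- f )(t) = t^{-β} (I^{α+β}_-( s^{-α} f(s) ))(t) holds for almost all t > 0, where powers of the variable denote multiplication operators. -/
open MeasureTheory Real Set
open scoped ENNReal

lemma realBeta {α β : ℝ} (hα : 0 < α) (hβ : 0 < β) :
    ∫ x in Ioo (0:ℝ) 1, x ^ (α - 1) * (1 - x) ^ (β - 1)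
      = Gamma α * Gamma β / Gamma (α + β) := by
  have h := Complex.Gamma_mul_Gamma_eq_betaIntegral (s := α) (t := β)
    (by simpa using hα) (by simpa using hβ)
  have hbi : Complex.betaIntegral α β
      = ((∫ x in Ioo (0:ℝ) 1, x ^ (α - 1) * (1 - x) ^ (β - 1) : ℝ) : ℂ) := by
    rw [Complex.betaIntegral, intervalIntegral.integral_of_le zero_le_one,
      ← integral_Ioc_eq_integral_Ioo]
    have : ∫ x in Ioc (0:ℝ) 1, ((x:ℂ) ^ ((α:ℂ) - 1) * (1 - (x:ℂ)) ^ ((β:ℂ) - 1))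
        = ∫ x in Ioc (0:ℝ) 1, ((x ^ (α - 1) * (1 - x) ^ (β - 1) : ℝ) : ℂ) := by
      refine setIntegral_congr_fun measurableSet_Ioc (fun x hx => ?_)
      have hx0 : (0:ℝ) ≤ x := le_of_lt hx.1
      have hx1 : (0:ℝ) ≤ 1 - x := by linarith [hx.2]
      push_cast
      rw [Complex.ofReal_cpow hx0, Complex.ofReal_cpow hx1]
      push_cast
      ring
    rw [this]
    exact integral_ofReal (𝕜 := ℂ)
  rw [hbi, ← Complex.ofReal_add, Complex.Gamma_ofReal, Complex.Gamma_ofReal,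
    Complex.Gamma_ofReal] at h
  have hne : Gamma (α + β) ≠ 0 := (Gamma_pos_of_pos (by linarith)).ne'
  have h' : Gamma α * Gamma β
      = Gamma (α + β) * ∫ x in Ioo (0:ℝ) 1, x ^ (α - 1) * (1 - x) ^ (β - 1) := by
    exact_mod_cast h
  rw [h']
  field_simp
lemma kernelInt {α β t u : ℝ} (hα : 0 < α) (hβ : 0 < β) (ht : 0 < t) (htu : t < u) :
    ∫ s in Ioo t u, (s - t) ^ (α - 1) * s ^ (-α - β) * (u - s) ^ (β - 1)
      = (Gamma α * Gamma β / Gamma (α + β))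
          * (t ^ (-β) * u ^ (-α) * (u - t) ^ (α + β - 1)) := by
  have hu : 0 < u := ht.trans htu
  have hut : 0 < u - t := sub_pos.mpr htu
  set φ : ℝ → ℝ := fun w => t * u / (u - w * (u - t)) with hφ
  have hdpos : ∀ w ∈ Ioo (0:ℝ) 1, t < u - w * (u - t) ∧ u - w * (u - t) < u := by
    intro w hw
    constructor <;> nlinarith [hw.1, hw.2]
  have himg : φ '' Ioo 0 1 = Ioo t u := by
    ext s
    constructor
    · rintro ⟨w, hw, rfl⟩
      obtain ⟨hd1, hd2⟩ := hdpos w hw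
      have hd0 : 0 < u - w * (u - t) := ht.trans hd1
      constructor
      · rw [lt_div_iff₀ hd0]; nlinarith
      · rw [div_lt_iff₀ hd0]; nlinarith
    · intro hs
      refine ⟨u * (s - t) / (s * (u - t)), ?_, ?_⟩
      · have hs0 : 0 < s := ht.trans hs.1
        have hst : 0 < s - t := sub_pos.mpr hs.1
        constructor
        · positivity
        · rw [div_lt_one (by positivity)]; nlinarith [hs.1, hs.2]
      · have hs0 : 0 < s := ht.trans hs.1
        have : u - u * (s - t) / (s * (u - t)) * (u - t) = u * t / s := by
          field_simp; ring
        show t * u / (u - u * (s - t) / (s * (u - t)) * (u - t)) = s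
        rw [this]
        field_simp
  -- derivative
  have hderiv : ∀ w ∈ Ioo (0:ℝ) 1,
      HasDerivWithinAt φ (t * u * (u - t) / (u - w * (u - t)) ^ 2) (Ioo 0 1) w := by
    intro w hw
    have hd0 : (u - w * (u - t)) ≠ 0 := (ht.trans (hdpos w hw).1).ne'
    have h1 : HasDerivAt (fun w : ℝ => u - w * (u - t)) (-(u - t)) w := by
      simpa using ((hasDerivAt_id w).mul_const (u - t)).const_sub u
    have h2 : HasDerivAt φ (t * u * (u - t) / (u - w * (u - t)) ^ 2) w := by
      have := ((h1.inv hd0).const_mul (t * u))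
      refine (this.congr_deriv (by rw [neg_neg]; ring)).congr_of_eventuallyEq
        (Filter.Eventually.of_forall fun y => ?_)
      simp only [hφ, Pi.inv_apply, div_eq_mul_inv]
    exact h2.hasDerivWithinAt
  have hinj : InjOn φ (Ioo 0 1) := by
    intro w1 h1 w2 h2 he
    have hd1 : 0 < u - w1 * (u - t) := ht.trans (hdpos w1 h1).1
    have hd2 : 0 < u - w2 * (u - t) := ht.trans (hdpos w2 h2).1
    rw [hφ] at he
    simp only [div_eq_div_iff hd1.ne' hd2.ne'] at he
    have : w1 * (u - t) = w2 * (u - t) := by nlinarith [mul_pos ht hu]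
    exact mul_right_cancel₀ hut.ne' this
  have hcov := integral_image_eq_integral_abs_deriv_smul measurableSet_Ioo hderiv hinj
    (fun s => (s - t) ^ (α - 1) * s ^ (-α - β) * (u - s) ^ (β - 1))
  rw [himg] at hcov
  rw [hcov]
  have hpt : ∀ w ∈ Ioo (0:ℝ) 1,
      |t * u * (u - t) / (u - w * (u - t)) ^ 2| •
        ((φ w - t) ^ (α - 1) * (φ w) ^ (-α - β) * (u - φ w) ^ (β - 1))
      = (w ^ (α - 1) * (1 - w) ^ (β - 1))
          * (t ^ (-β) * u ^ (-α) * (u - t) ^ (α + β - 1)) := by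
    intro w hw
    have hw0 : 0 < w := hw.1
    have hw1 : 0 < 1 - w := by linarith [hw.2]
    set D := u - w * (u - t) with hD
    have hD0 : 0 < D := ht.trans (hdpos w hw).1
    have e1 : φ w - t = t * w * (u - t) / D := by
      have hD' : u - w * (u - t) ≠ 0 := hD0.ne'
      rw [hφ]; dsimp only; rw [hD]; field_simp; ring
    have e2 : u - φ w = u * (1 - w) * (u - t) / D := by
      have hD' : u - w * (u - t) ≠ 0 := hD0.ne'
      rw [hφ]; dsimp only; rw [hD]; field_simp; ring
    have e3 : φ w = t * u / D := rfl
    have habs : |t * u * (u - t) / D ^ 2| = t * u * (u - t) / D ^ 2 :=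
      abs_of_pos (by positivity)
    rw [e1, e2, e3, habs, smul_eq_mul]
    -- now a pure rpow identity in positive atoms
    have key : ∀ x : ℝ, 0 < x → ∀ p : ℝ, x ^ p = exp (p * log x) := by
      intro x hx p; rw [Real.rpow_def_of_pos hx, mul_comm]
    have f1 : t * w * (u - t) / D = exp (log t + log w + log (u - t) - log D) := by
      rw [Real.exp_sub, Real.exp_add, Real.exp_add, exp_log ht, exp_log hw0,
        exp_log hut, exp_log hD0]
    have f2 : t * u / D = exp (log t + log u - log D) := by
      rw [Real.exp_sub, Real.exp_add, exp_log ht, exp_log hu, exp_log hD0]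
    have f3 : u * (1 - w) * (u - t) / D = exp (log u + log (1 - w) + log (u - t) - log D) := by
      rw [Real.exp_sub, Real.exp_add, Real.exp_add, exp_log hu, exp_log hw1,
        exp_log hut, exp_log hD0]
    have f4 : t * u * (u - t) / D ^ 2
        = exp (log t + log u + log (u - t) - 2 * log D) := by
      rw [Real.exp_sub, Real.exp_add, Real.exp_add, exp_log ht, exp_log hu, exp_log hut]
      rw [show (2:ℝ) * log D = log D + log D by ring, Real.exp_add, exp_log hD0]
      ring
    rw [f1, f2, f3, f4, ← Real.exp_mul, ← Real.exp_mul, ← Real.exp_mul,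
      key t ht, key u hu, key (u - t) hut, key w hw0, key (1 - w) hw1]
    simp only [← Real.exp_add]
    congr 1
    ring
  rw [setIntegral_congr_fun measurableSet_Ioo hpt]
  rw [integral_mul_const, realBeta hα hβ]


lemma measRpowAux (c : ℝ) : Measurable fun x : ℝ => x ^ c := by measurability

lemma Measurable.rpow_const' {X : Type*} [MeasurableSpace X] {g : X → ℝ}
    (hg : Measurable g) (c : ℝ) : Measurable fun x => g x ^ c :=
  (measRpowAux c).comp hg

/-- Right-sided Riemann–Liouville fractional integral of order `α`. -/
noncomputable def RLminus (α : ℝ) (f : ℝ → ℝ) (t : ℝ) : ℝ :=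
  (Real.Gamma α)⁻¹ * ∫ s in Ioi t, f s * (s - t) ^ (α - 1)

/-- The weighted composition identity
`I^α_-( s^{-α-β} (I^β_- f)(s) )(t) = t^{-β} (I^{α+β}_-( s^{-α} f(s) ))(t)` for a.e. `t > 0`,
provided all the integrals converge absolutely. -/
theorem rl_minus_weighted_composition (α β : ℝ) (hα : 0 < α) (hβ : 0 < β) (f : ℝ → ℝ)
    (hmeas : Measurable f)
    (habs₁ : ∀ t > (0 : ℝ),
      ∫⁻ s in Ioi t, ENNReal.ofReal (|f s| * s ^ (-α) * (s - t) ^ (α + β - 1)) < ⊤)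
    (habs₂ : ∀ t > (0 : ℝ),
      ∫⁻ s in Ioi t, ENNReal.ofReal ((s - t) ^ (α - 1) * s ^ (-α - β)) *
        (∫⁻ u in Ioi s, ENNReal.ofReal (|f u| * (u - s) ^ (β - 1))) < ⊤) :
    ∀ᵐ t ∂(volume.restrict (Ioi (0 : ℝ))),
      RLminus α (fun s => s ^ (-α - β) * RLminus β f s) t
        = t ^ (-β) * RLminus (α + β) (fun s => s ^ (-α) * f s) t := by
  rw [MeasureTheory.ae_restrict_iff' measurableSet_Ioi]
  refine Filter.Eventually.of_forall (fun t ht => ?_)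
  replace ht : 0 < t := ht
  have hΓα := Real.Gamma_pos_of_pos hα
  have hΓβ := Real.Gamma_pos_of_pos hβ
  have hΓαβ := Real.Gamma_pos_of_pos (add_pos hα hβ)
  set F : ℝ → ℝ → ℝ := fun s u =>
    if s < u then ((s - t) ^ (α - 1) * s ^ (-α - β)) * (f u * (u - s) ^ (β - 1)) else 0
    with hF
  have hFm : Measurable (Function.uncurry F) := by
    apply Measurable.ite (measurableSet_lt measurable_fst measurable_snd)
    · exact ((((measurable_fst.sub_const t).rpow_const' _).mul
        (measurable_fst.rpow_const' _)).mul
        ((hmeas.comp measurable_snd).mul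
          ((measurable_snd.sub measurable_fst).rpow_const' _)))
    · exact measurable_const
  have hInt : Integrable (Function.uncurry F)
      ((volume.restrict (Ioi t)).prod (volume.restrict (Ioi t))) := by
    refine ⟨hFm.aestronglyMeasurable, ?_⟩
    rw [hasFiniteIntegral_def, lintegral_prod _ hFm.enorm.aemeasurable]
    simp only [Function.uncurry_apply_pair]
    have hbound : ∫⁻ s in Ioi t, ∫⁻ u in Ioi t, (‖F s u‖₊ : ℝ≥0∞)
        = ∫⁻ s in Ioi t, ENNReal.ofReal ((s - t) ^ (α - 1) * s ^ (-α - β)) *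
            (∫⁻ u in Ioi s, ENNReal.ofReal (|f u| * (u - s) ^ (β - 1))) := by
      refine setLIntegral_congr_fun measurableSet_Ioi
        (fun s hs => ?_)
      have hst : t < s := hs
      have hs0 : 0 < s := ht.trans hst
      have hKnn : 0 ≤ (s - t) ^ (α - 1) * s ^ (-α - β) :=
        mul_nonneg (rpow_nonneg (by linarith) _) (rpow_nonneg hs0.le _)
      have hpt : ∀ u, (‖F s u‖₊ : ℝ≥0∞)
          = (Ioi s).indicator (fun u =>
              ENNReal.ofReal ((s - t) ^ (α - 1) * s ^ (-α - β)) *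
                ENNReal.ofReal (|f u| * (u - s) ^ (β - 1))) u := by
        intro u
        rw [indicator_apply]
        by_cases h : s < u
        · have hus : 0 ≤ u - s := by linarith
          simp only [hF, if_pos h, mem_Ioi, if_pos h]
          rw [← enorm_eq_nnnorm, Real.enorm_eq_ofReal_abs, ← ENNReal.ofReal_mul hKnn]
          congr 1
          rw [abs_mul, abs_of_nonneg hKnn, abs_mul, abs_of_nonneg (rpow_nonneg hus _)]
        · simp only [hF, if_neg h, mem_Ioi, if_neg h, nnnorm_zero, ENNReal.coe_zero]
      rw [lintegral_congr hpt, lintegral_indicator measurableSet_Ioi,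
        Measure.restrict_restrict (measurableSet_Ioi : MeasurableSet (Ioi s)),
        Ioi_inter_Ioi, sup_eq_left.mpr hst.le,
        lintegral_const_mul (f := fun u => ENNReal.ofReal (|f u| * (u - s) ^ (β - 1))) _ ((hmeas.abs.mul
          ((measurable_id'.sub_const s).rpow_const' _)).ennreal_ofReal)]
    simp only [enorm_eq_nnnorm]
    rw [hbound]
    exact habs₂ t ht
  -- Step 1: rewrite LHS as iterated integral
  have step1 : ∫ s in Ioi t,
        (s ^ (-α - β) * RLminus β f s) * (s - t) ^ (α - 1)
      = (Gamma β)⁻¹ * ∫ s in Ioi t, ∫ u in Ioi t, F s u := by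
    rw [← integral_const_mul]
    refine setIntegral_congr_fun measurableSet_Ioi (fun s hs => ?_)
    have hst : t < s := hs
    have hinner : ∫ u in Ioi t, F s u
        = ((s - t) ^ (α - 1) * s ^ (-α - β)) * ∫ u in Ioi s, f u * (u - s) ^ (β - 1) := by
      have hpt : ∀ u, F s u = (Ioi s).indicator
          (fun u => ((s - t) ^ (α - 1) * s ^ (-α - β)) * (f u * (u - s) ^ (β - 1))) u := by
        intro u; rw [indicator_apply]; simp only [hF, mem_Ioi]
      rw [integral_congr_ae (Filter.Eventually.of_forall hpt),
        integral_indicator measurableSet_Ioi,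
        Measure.restrict_restrict (measurableSet_Ioi : MeasurableSet (Ioi s)),
        Ioi_inter_Ioi, sup_eq_left.mpr hst.le, integral_const_mul]
    rw [hinner, RLminus]
    ring
  -- Step 2-3: swap and evaluate inner integral
  have step2 : (∫ s in Ioi t, ∫ u in Ioi t, F s u)
      = ∫ u in Ioi t, ∫ s in Ioi t, F s u := integral_integral_swap hInt
  have step3 : (∫ u in Ioi t, ∫ s in Ioi t, F s u)
      = ∫ u in Ioi t, ((Gamma α * Gamma β / Gamma (α + β)) * t ^ (-β)) *
          (u ^ (-α) * f u * (u - t) ^ (α + β - 1)) := by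
    refine setIntegral_congr_fun measurableSet_Ioi (fun u hu => ?_)
    have htu : t < u := hu
    have hpt : ∀ s, F s u = (Iio u).indicator
        (fun s => f u * ((s - t) ^ (α - 1) * s ^ (-α - β) * (u - s) ^ (β - 1))) s := by
      intro s; rw [indicator_apply]; simp only [hF, mem_Iio]
      by_cases h : s < u
      · rw [if_pos h, if_pos h]; ring
      · rw [if_neg h, if_neg h]
    rw [integral_congr_ae (Filter.Eventually.of_forall hpt),
      integral_indicator measurableSet_Iio,
      Measure.restrict_restrict (measurableSet_Iio : MeasurableSet (Iio u)),
      inter_comm (Iio u) (Ioi t), Ioi_inter_Iio, integral_const_mul,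
      kernelInt hα hβ ht htu]
    ring
  -- finish
  show RLminus α (fun s => s ^ (-α - β) * RLminus β f s) t = _
  rw [RLminus]
  rw [step1, step2, step3, integral_const_mul, RLminus]
  field_simp
end

section
/- Let f be a locally integrable function on (0,∞) and α > 0. If ∫₁^∞ |f(s)| s^{2α-1} ds < ∞, then the modified Erdélyi–Kober integral (I^α_{-,2} f)(t) = (2/Γ(α)) ∫_t^∞ f(s) s (s²-t²)^{α-1} ds is finite for almost all t > 0. If f is nonnegative and ∫₁^∞ f(s) s^{2α-1} ds = ∞, then (I^α_{-,2} f)(t) = ∞ for every t ≥ 0. -/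
open MeasureTheory Real Set


lemma ek_near (α : ℝ) (hα : 0 < α) {f : ℝ → ℝ}
    (hloc : LocallyIntegrableOn f (Ioi (0:ℝ))) {ε M : ℝ} (hε : 0 < ε) (hM : ε ≤ M) :
    ∀ᵐ t : ℝ, t ∈ Ioo ε M →
      IntegrableOn (fun s => |f s| * (s - t) ^ (α - 1)) (Ioo t (2*M)) := by
  have hM2 : (0:ℝ) < 2*M := by linarith
  set F := (Ioo ε (2*M)).indicator (fun s => |f s|) with hFdef
  set H := (Ioo (0:ℝ) (2*M)).indicator (fun u => u ^ (α - 1)) with hHdef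
  have hF : Integrable F := by
    rw [integrable_indicator_iff measurableSet_Ioo]
    exact ((hloc.integrableOn_compact_subset
      (fun x hx => hε.trans_le hx.1 : Icc ε (2*M) ⊆ Ioi 0) isCompact_Icc).mono_set
      Ioo_subset_Icc_self).abs
  have hH : Integrable H := by
    rw [integrable_indicator_iff measurableSet_Ioo]
    exact (intervalIntegral.integrableOn_Ioo_rpow_iff hM2).2 (by linarith)
  have hG : Integrable (fun u => H (-u)) := hH.comp_neg
  have h := hF.ae_convolution_exists (ContinuousLinearMap.mul ℝ ℝ) hG
  filter_upwards [h] with t ht hts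
  have ht' : Integrable (fun s => F s * H (-(t - s))) volume := by
    simpa [ConvolutionExistsAt, ContinuousLinearMap.mul_apply'] using ht
  refine (ht'.integrableOn (s := Ioo t (2*M))).congr_fun ?_ measurableSet_Ioo
  intro s hs
  have h1 : s ∈ Ioo ε (2*M) := ⟨hts.1.trans hs.1, hs.2⟩
  have h2 : -(t - s) ∈ Ioo (0:ℝ) (2*M) := by
    constructor
    · simp only [neg_sub]; linarith [hs.1]
    · simp only [neg_sub]; linarith [hs.2, hts.1, hε]
  have h2' : s - t ∈ Ioo (0:ℝ) (2*M) := by simpa using h2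
  simp only [hFdef, hHdef, neg_sub, indicator_of_mem h1, indicator_of_mem h2']

lemma ek_rpow_sq {α s : ℝ} (hs : 0 < s) : ((s^2 : ℝ)) ^ (α - 1) = s ^ (2*α - 2) := by
  rw [← Real.rpow_natCast s 2, ← Real.rpow_mul hs.le]
  norm_num
  ring_nf

lemma ek_window (α : ℝ) (hα : 0 < α) {f : ℝ → ℝ} (hmeas : Measurable f)
    (hloc : LocallyIntegrableOn f (Ioi (0:ℝ)))
    (hint : IntegrableOn (fun s => |f s| * s ^ (2 * α - 1)) (Ioi (1:ℝ)))
    {ε M : ℝ} (hε : 0 < ε) (hε1 : ε ≤ 1) (hM : 1 ≤ M) :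
    ∀ᵐ t : ℝ, t ∈ Ioo ε M →
      IntegrableOn (fun s => f s * s * (s ^ 2 - t ^ 2) ^ (α - 1)) (Ioi t) := by
  filter_upwards [ek_near α hα hloc hε (hε1.trans hM)] with t hnear ht
  have ht0 : 0 < t := hε.trans ht.1
  have htM : t < M := ht.2
  have htmeas : Measurable (fun s => f s * s * (s ^ 2 - t ^ 2) ^ (α - 1)) :=
by fun_prop
  rw [← Ioo_union_Ici_eq_Ioi (show t < 2*M by linarith)]
  refine IntegrableOn.union ?_ ?_
  · -- near part on Ioo t (2M)
    set K := max ((3*M) ^ (α-1)) ((2*ε) ^ (α-1)) with hK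
    have hK0 : 0 ≤ K := le_trans (rpow_nonneg (by linarith) _) (le_max_left _ _)
    refine Integrable.mono ((hnear ht).const_mul (2*M*K)) htmeas.aestronglyMeasurable ?_
    rw [ae_restrict_iff' measurableSet_Ioo]
    refine Filter.Eventually.of_forall fun s hs => ?_
    have hst : 0 < s - t := by linarith [hs.1]
    have hs0 : 0 < s := ht0.trans hs.1
    have hsub : (s^2 - t^2 : ℝ) = (s - t) * (s + t) := by ring
    have hmulr : ((s^2 - t^2 : ℝ)) ^ (α-1) = (s-t)^(α-1) * (s+t)^(α-1) := by
      rw [hsub, Real.mul_rpow hst.le (by linarith)]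
    have hKb : (s+t) ^ (α-1) ≤ K := by
      rcases le_or_gt 1 α with h1 | h1
      · exact le_trans (rpow_le_rpow (by linarith) (by linarith [hs.2]) (by linarith))
          (le_max_left _ _)
      · exact le_trans (rpow_le_rpow_of_nonpos (by linarith) (by linarith [ht.1]) (by linarith))
          (le_max_right _ _)
    have hrnn : (0:ℝ) ≤ (s^2 - t^2) ^ (α-1) := by
      apply rpow_nonneg; nlinarith [hs.1, ht0]
    rw [Real.norm_eq_abs, Real.norm_eq_abs, abs_mul, abs_mul, abs_of_nonneg hrnn,
      abs_of_pos hs0]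
    have habs : |2*M*K * (|f s| * (s - t) ^ (α - 1))| = 2*M*K * (|f s| * (s - t) ^ (α - 1)) := by
      apply abs_of_nonneg
      positivity
    rw [habs, hmulr]
    calc |f s| * s * ((s-t)^(α-1) * (s+t)^(α-1))
        = (|f s| * (s-t)^(α-1)) * (s * (s+t)^(α-1)) := by ring
      _ ≤ (|f s| * (s-t)^(α-1)) * (2*M * K) := by
          apply mul_le_mul_of_nonneg_left _ (by positivity)
          exact mul_le_mul hs.2.le hKb (rpow_nonneg (by linarith) _) (by linarith)
      _ = 2*M*K * (|f s| * (s - t) ^ (α - 1)) := by ring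
  · -- far part on Ici (2M)
    set C := max 1 ((3/4 : ℝ) ^ (α-1)) with hC
    have hC0 : (0:ℝ) ≤ C := le_trans zero_le_one (le_max_left _ _)
    have hfar : IntegrableOn (fun s => |f s| * s ^ (2*α-1)) (Ici (2*M)) :=
      hint.mono_set (fun x hx => lt_of_lt_of_le (by linarith : (1:ℝ) < 2*M) hx)
    refine Integrable.mono (hfar.const_mul C) htmeas.aestronglyMeasurable ?_
    rw [ae_restrict_iff' measurableSet_Ici]
    refine Filter.Eventually.of_forall fun s hs => ?_
    have hs2 : (2:ℝ)*M ≤ s := hs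
    have hs0 : 0 < s := by linarith
    have htpos : t^2 ≤ s^2/4 := by nlinarith
    have hpos : (0:ℝ) < s^2 - t^2 := by nlinarith
    have hub : ((s^2 - t^2 : ℝ)) ^ (α-1) ≤ C * s ^ (2*α-2) := by
      rcases le_or_gt 1 α with h1 | h1
      · calc ((s^2 - t^2 : ℝ)) ^ (α-1) ≤ (s^2) ^ (α-1) :=
              rpow_le_rpow hpos.le (by nlinarith) (by linarith)
          _ = s ^ (2*α-2) := ek_rpow_sq hs0
          _ ≤ C * s ^ (2*α-2) := le_mul_of_one_le_left (rpow_nonneg hs0.le _) (le_max_left _ _)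
      · calc ((s^2 - t^2 : ℝ)) ^ (α-1) ≤ ((3/4) * s^2) ^ (α-1) :=
              rpow_le_rpow_of_nonpos (by nlinarith) (by nlinarith) (by linarith)
          _ = (3/4 : ℝ)^(α-1) * s ^ (2*α-2) := by
              rw [Real.mul_rpow (by norm_num) (by positivity), ek_rpow_sq hs0]
          _ ≤ C * s ^ (2*α-2) :=
              mul_le_mul_of_nonneg_right (le_max_right _ _) (rpow_nonneg hs0.le _)
    have hss : s * s ^ (2*α-2) = s ^ (2*α-1) := by
      rw [show (2*α-1 : ℝ) = 1 + (2*α-2) by ring, Real.rpow_add hs0, Real.rpow_one]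
    rw [Real.norm_eq_abs, Real.norm_eq_abs, abs_mul, abs_mul,
      abs_of_pos (Real.rpow_pos_of_pos hpos _), abs_of_pos hs0]
    have habs : |C * (|f s| * s ^ (2*α-1))| = C * (|f s| * s ^ (2*α-1)) := by
      apply abs_of_nonneg; positivity
    rw [habs]
    calc |f s| * s * (s^2 - t^2)^(α-1) ≤ |f s| * s * (C * s ^ (2*α-2)) := by
          apply mul_le_mul_of_nonneg_left hub (by positivity)
      _ = C * (|f s| * (s * s ^ (2*α-2))) := by ring
      _ = C * (|f s| * s ^ (2*α-1)) := by rw [hss]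

lemma ek_fin_piece (α : ℝ) {f : ℝ → ℝ}
    (hloc : LocallyIntegrableOn f (Ioi (0:ℝ))) {T : ℝ} (hT : 1 ≤ T) :
    ∫⁻ s in Ioc (1:ℝ) T, ENNReal.ofReal (f s * s ^ (2*α - 1)) ≠ ⊤ := by
  have hint : IntegrableOn f (Icc (1:ℝ) T) :=
    hloc.integrableOn_compact_subset
      (fun x hx => lt_of_lt_of_le one_pos hx.1) isCompact_Icc
  set B := max 1 (T ^ (2*α - 1)) with hB
  have hB0 : (0:ℝ) ≤ B := le_trans zero_le_one (le_max_left _ _)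
  have hle : ∫⁻ s in Ioc (1:ℝ) T, ENNReal.ofReal (f s * s ^ (2*α-1))
      ≤ ∫⁻ s in Ioc (1:ℝ) T, ENNReal.ofReal B * ENNReal.ofReal |f s| := by
    refine setLIntegral_mono' measurableSet_Ioc fun s hs => ?_
    rw [← ENNReal.ofReal_mul hB0]
    apply ENNReal.ofReal_le_ofReal
    have hs0 : (0:ℝ) < s := lt_of_lt_of_le one_pos hs.1.le
    have h1 : f s * s ^ (2*α-1) ≤ |f s| * s ^ (2*α-1) :=
      mul_le_mul_of_nonneg_right (le_abs_self _) (rpow_nonneg hs0.le _)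
    refine h1.trans ?_
    rw [mul_comm B]
    refine mul_le_mul_of_nonneg_left ?_ (abs_nonneg _)
    rcases le_or_gt 0 (2*α-1) with h | h
    · exact le_trans (rpow_le_rpow hs0.le hs.2 h) (le_max_right _ _)
    · exact le_trans (rpow_le_one_of_one_le_of_nonpos hs.1.le h.le) (le_max_left _ _)
  refine ne_top_of_le_ne_top ?_ hle
  rw [lintegral_const_mul' _ _ ENNReal.ofReal_ne_top]
  refine ENNReal.mul_ne_top ENNReal.ofReal_ne_top ?_
  have hfin := (hint.mono_set Ioc_subset_Icc_self).2
  rw [HasFiniteIntegral] at hfin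
  refine ne_top_of_le_ne_top hfin.ne (lintegral_mono fun s => ?_)
  rw [← Real.norm_eq_abs, ofReal_norm_eq_enorm]

lemma ek_part2 (α : ℝ) (hα : 0 < α) {f : ℝ → ℝ} (hmeas : Measurable f)
    (hloc : LocallyIntegrableOn f (Ioi (0:ℝ)))
    (hpos : ∀ s ∈ Ioi (0:ℝ), 0 ≤ f s)
    (hdiv : ∫⁻ s in Ioi (1:ℝ), ENNReal.ofReal (f s * s ^ (2 * α - 1)) = ⊤)
    (t : ℝ) (ht : 0 ≤ t) :
    ∫⁻ s in Ioi t, ENNReal.ofReal (f s * s * (s ^ 2 - t ^ 2) ^ (α - 1)) = ⊤ := by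
  set T := 2*t + 1 with hTdef
  have hT1 : (1:ℝ) ≤ T := by simp [hTdef]; linarith
  set c := min 1 ((3/4 : ℝ) ^ (α - 1)) with hc
  have hc0 : 0 < c := lt_min one_pos (rpow_pos_of_pos (by norm_num) _)
  -- tail divergence of the comparison integral
  have htail : ∫⁻ s in Ioi T, ENNReal.ofReal (f s * s ^ (2*α - 1)) = ⊤ := by
    have hsplit : (∫⁻ s in Ioc (1:ℝ) T, ENNReal.ofReal (f s * s ^ (2*α - 1)))
        + ∫⁻ s in Ioi T, ENNReal.ofReal (f s * s ^ (2*α - 1)) = ⊤ := by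
      rw [← lintegral_union measurableSet_Ioi (Ioc_disjoint_Ioi le_rfl),
        Ioc_union_Ioi_eq_Ioi hT1]
      exact hdiv
    rcases ENNReal.add_eq_top.1 hsplit with h | h
    · exact absurd h (ek_fin_piece α hloc hT1)
    · exact h
  -- pointwise comparison on Ioi T
  have key : ∀ s ∈ Ioi T, ENNReal.ofReal c * ENNReal.ofReal (f s * s ^ (2*α-1))
      ≤ ENNReal.ofReal (f s * s * (s ^ 2 - t ^ 2) ^ (α - 1)) := by
    intro s hs
    have hsT : T < s := hs
    have hs1 : (1:ℝ) < s := lt_of_le_of_lt hT1 hsT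
    have hs0 : (0:ℝ) < s := by linarith
    have ht2 : t ^ 2 ≤ s^2/4 := by nlinarith
    have hpos' : (0:ℝ) < s^2 - t^2 := by nlinarith
    have hfs : 0 ≤ f s := hpos s (by simpa using hs0)
    rw [← ENNReal.ofReal_mul hc0.le]
    apply ENNReal.ofReal_le_ofReal
    have hss : s ^ (2*α-1) = s * s ^ (2*α-2) := by
      rw [show (2*α-1 : ℝ) = 1 + (2*α-2) by ring, Real.rpow_add hs0, Real.rpow_one]
    have hlb : c * s ^ (2*α-2) ≤ (s^2 - t^2) ^ (α-1) := by
      rcases le_or_gt 1 α with h1 | h1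
      · calc c * s ^ (2*α-2) ≤ (3/4 : ℝ)^(α-1) * s ^ (2*α-2) :=
              mul_le_mul_of_nonneg_right (min_le_right _ _) (rpow_nonneg hs0.le _)
          _ = ((3/4) * s^2) ^ (α-1) := by
              rw [Real.mul_rpow (by norm_num) (by positivity), ek_rpow_sq hs0]
          _ ≤ (s^2 - t^2) ^ (α-1) := rpow_le_rpow (by positivity) (by nlinarith) (by linarith)
      · calc c * s ^ (2*α-2) ≤ 1 * s ^ (2*α-2) :=
              mul_le_mul_of_nonneg_right (min_le_left _ _) (rpow_nonneg hs0.le _)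
          _ = (s^2) ^ (α-1) := by rw [one_mul, ek_rpow_sq hs0]
          _ ≤ (s^2 - t^2) ^ (α-1) :=
              rpow_le_rpow_of_nonpos hpos' (by nlinarith) (by linarith)
    calc c * (f s * s ^ (2*α-1)) = (f s * s) * (c * s ^ (2*α-2)) := by rw [hss]; ring
      _ ≤ (f s * s) * ((s^2 - t^2) ^ (α-1)) :=
          mul_le_mul_of_nonneg_left hlb (by positivity)
      _ = f s * s * (s^2 - t^2) ^ (α-1) := by ring
  -- conclude
  have hTt : Ioi T ⊆ Ioi t := fun x hx => lt_of_le_of_lt (by linarith : t ≤ T) hx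
  have hchain : (⊤ : ENNReal) ≤ ∫⁻ s in Ioi t, ENNReal.ofReal (f s * s * (s ^ 2 - t ^ 2) ^ (α - 1)) := by
    calc (⊤:ENNReal) = ENNReal.ofReal c * ∫⁻ s in Ioi T, ENNReal.ofReal (f s * s ^ (2*α-1)) := by
          rw [htail, ENNReal.mul_top (ENNReal.ofReal_pos.2 hc0).ne']
      _ = ∫⁻ s in Ioi T, ENNReal.ofReal c * ENNReal.ofReal (f s * s ^ (2*α-1)) :=
          (lintegral_const_mul' _ _ ENNReal.ofReal_ne_top).symm
      _ ≤ ∫⁻ s in Ioi T, ENNReal.ofReal (f s * s * (s^2 - t^2) ^ (α-1)) :=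
          setLIntegral_mono' measurableSet_Ioi key
      _ ≤ ∫⁻ s in Ioi t, ENNReal.ofReal (f s * s * (s^2 - t^2) ^ (α-1)) :=
          lintegral_mono_set hTt
  exact top_le_iff.1 hchain

/-- Finiteness and divergence of the modified Erdélyi–Kober integral
`(I^α_{-,2} f)(t) = (2/Γ(α)) ∫_t^∞ f(s) s (s²-t²)^{α-1} ds`:
if `∫₁^∞ |f(s)| s^{2α-1} ds < ∞` it converges absolutely for a.e. `t > 0`;
if `f ≥ 0` and `∫₁^∞ f(s) s^{2α-1} ds = ∞` it is `∞` for every `t ≥ 0`. -/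
theorem ek_minus_finite_ae_and_infinite (α : ℝ) (hα : 0 < α) (f : ℝ → ℝ)
    (hmeas : Measurable f)
    (hloc : LocallyIntegrableOn f (Ioi (0 : ℝ))) :
    (IntegrableOn (fun s => |f s| * s ^ (2 * α - 1)) (Ioi (1 : ℝ)) →
      ∀ᵐ t ∂(volume.restrict (Ioi (0 : ℝ))),
        IntegrableOn (fun s => f s * s * (s ^ 2 - t ^ 2) ^ (α - 1)) (Ioi t)) ∧
    ((∀ s ∈ Ioi (0 : ℝ), 0 ≤ f s) →
      (∫⁻ s in Ioi (1 : ℝ), ENNReal.ofReal (f s * s ^ (2 * α - 1)) = ⊤) →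
      ∀ t : ℝ, 0 ≤ t →
        ∫⁻ s in Ioi t, ENNReal.ofReal (f s * s * (s ^ 2 - t ^ 2) ^ (α - 1)) = ⊤) := by
  constructor
  · intro hint
    rw [ae_restrict_iff' measurableSet_Ioi]
    have H : ∀ n : ℕ, ∀ᵐ t : ℝ, t ∈ Ioo ((n:ℝ)+1)⁻¹ ((n:ℝ)+1) →
        IntegrableOn (fun s => f s * s * (s ^ 2 - t ^ 2) ^ (α - 1)) (Ioi t) := by
      intro n
      have h1 : (0:ℝ) < (n:ℝ)+1 := by positivity
      exact ek_window α hα hmeas hloc hint (by positivity)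
        (inv_le_one_of_one_le₀ (by simp)) (by simp)
    filter_upwards [ae_all_iff.2 H] with t hT ht
    have ht0 : (0:ℝ) < t := ht
    obtain ⟨n, hn⟩ := exists_nat_gt (max t t⁻¹)
    have hn1 : t < (n:ℝ)+1 := by
      have := le_max_left t t⁻¹; linarith
    have hn2 : ((n:ℝ)+1)⁻¹ < t := by
      have h2 : t⁻¹ < (n:ℝ)+1 := by
        have := le_max_right t t⁻¹; linarith
      have h3 : (0:ℝ) < (n:ℝ)+1 := by positivity
      rw [inv_lt_comm₀ h3 ht0]
      exact h2
    exact hT n ⟨hn2, hn1⟩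
  · intro hpos hdiv t ht
    exact ek_part2 α hα hmeas hloc hpos hdiv t ht
end

section
/- For α, β > 0 and f measurable on (0,∞) such that all integrals converge absolutely, the modified Erdélyi–Kober integrals satisfy the semigroup property I^α_{±,2} (I^β_{±,2} f) = I^{α+β}_{±,2} f almost everywhere on (0,∞). -/
open MeasureTheory Real Set

lemma beta01_integrable {α β : ℝ} (hα : 0 < α) (hβ : 0 < β) :
    IntegrableOn (fun x : ℝ => x ^ (β - 1) * (1 - x) ^ (α - 1)) (Ioc (0:ℝ) 1) := by
  have h := (Complex.betaIntegral_convergent (u := (β:ℂ)) (v := (α:ℂ))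
    (by simpa using hβ) (by simpa using hα)).1
  have h2 : IntegrableOn (fun x : ℝ => ((x:ℂ) ^ ((β:ℂ) - 1) * (1 - (x:ℂ)) ^ ((α:ℂ) - 1)).re) (Ioc (0:ℝ) 1) := h.re
  refine h2.congr_fun (fun x hx => ?_) measurableSet_Ioc
  have hx0 : (0:ℝ) ≤ x := hx.1.le
  have hx1 : (0:ℝ) ≤ 1 - x := by linarith [hx.2]
  have e1 : (x:ℂ) ^ ((β:ℂ) - 1) = ((x ^ (β - 1) : ℝ) : ℂ) := by
    rw [Complex.ofReal_cpow hx0]; push_cast; ring_nf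
  have e2 : (1 - (x:ℂ)) ^ ((α:ℂ) - 1) = (((1 - x) ^ (α - 1) : ℝ) : ℂ) := by
    rw [show (1 - (x:ℂ)) = (((1 - x : ℝ)) : ℂ) by push_cast; ring,
      Complex.ofReal_cpow hx1]
    push_cast; ring_nf
  simp [e1, e2, ← Complex.ofReal_mul]

lemma cpow_real_eq {x r : ℝ} (hx : 0 ≤ x) :
    (x:ℂ) ^ ((r:ℂ) - 1) = ((x ^ (r - 1) : ℝ) : ℂ) := by
  rw [Complex.ofReal_cpow hx]; push_cast; ring_nf

lemma beta01_integral {α β : ℝ} (hα : 0 < α) (hβ : 0 < β) :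
    ∫ x in Ioc (0:ℝ) 1, x ^ (β - 1) * (1 - x) ^ (α - 1)
      = Real.Gamma α * Real.Gamma β / Real.Gamma (α + β) := by
  have key := Complex.Gamma_mul_Gamma_eq_betaIntegral (s := (β:ℂ)) (t := (α:ℂ))
    (by simpa using hβ) (by simpa using hα)
  have heq : EqOn (fun x : ℝ => (x:ℂ) ^ ((β:ℂ) - 1) * (1 - (x:ℂ)) ^ ((α:ℂ) - 1))
      (fun x : ℝ => ((x ^ (β - 1) * (1 - x) ^ (α - 1) : ℝ) : ℂ)) (uIcc (0:ℝ) 1) := by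
    intro x hx
    rw [uIcc_of_le (by norm_num : (0:ℝ) ≤ 1)] at hx
    have hx1 : (0:ℝ) ≤ 1 - x := by linarith [hx.2]
    have e1 := cpow_real_eq (r := β) hx.1
    have e2 := cpow_real_eq (r := α) hx1
    rw [show ((1 - x : ℝ) : ℂ) = 1 - (x:ℂ) by push_cast; ring] at e2
    simp only [e1, e2, ← Complex.ofReal_mul]
  have hint : Complex.betaIntegral (β:ℂ) (α:ℂ)
      = ((∫ x in Ioc (0:ℝ) 1, x ^ (β - 1) * (1 - x) ^ (α - 1) : ℝ) : ℂ) := by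
    rw [Complex.betaIntegral, intervalIntegral.integral_congr heq,
      intervalIntegral.integral_ofReal,
      intervalIntegral.integral_of_le (by norm_num : (0:ℝ) ≤ 1)]
  rw [hint, ← Complex.ofReal_add, Complex.Gamma_ofReal, Complex.Gamma_ofReal,
    Complex.Gamma_ofReal] at key
  have key2 : Real.Gamma β * Real.Gamma α
      = Real.Gamma (β + α) * ∫ x in Ioc (0:ℝ) 1, x ^ (β - 1) * (1 - x) ^ (α - 1) := by
    exact_mod_cast key
  have hG : Real.Gamma (α + β) ≠ 0 := (Real.Gamma_pos_of_pos (by linarith)).ne'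
  rw [add_comm β α] at key2
  field_simp
  linarith [key2]

lemma affine_image {a b : ℝ} (hab : a < b) :
    (fun y : ℝ => a + (b - a) * y) '' Ioc 0 1 = Ioc a b := by
  have hc : 0 < b - a := by linarith
  ext v
  simp only [mem_image, mem_Ioc]
  constructor
  · rintro ⟨y, ⟨hy0, hy1⟩, rfl⟩
    constructor <;> nlinarith
  · rintro ⟨hv1, hv2⟩
    exact ⟨(v - a) / (b - a), ⟨div_pos (by linarith) hc, by rw [div_le_one hc]; linarith⟩,
      by field_simp; ring⟩

lemma betaI_integral {α β : ℝ} (hα : 0 < α) (hβ : 0 < β) {a b : ℝ} (hab : a < b) :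
    IntegrableOn (fun v => (v - a) ^ (β - 1) * (b - v) ^ (α - 1)) (Ioc a b) ∧
    ∫ v in Ioc a b, (v - a) ^ (β - 1) * (b - v) ^ (α - 1)
      = Real.Gamma α * Real.Gamma β / Real.Gamma (α + β) * (b - a) ^ (α + β - 1) := by
  have hc : 0 < b - a := by linarith
  set φ : ℝ → ℝ := fun y => a + (b - a) * y with hφ
  have hderiv : ∀ y ∈ Ioc (0:ℝ) 1, HasDerivWithinAt φ (b - a) (Ioc (0:ℝ) 1) y := by
    intro y _
    exact ((hasDerivAt_const y a).add ((hasDerivAt_id y).const_mul (b - a))).hasDerivWithinAt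
      |>.congr_deriv (by ring)
  have hinj : InjOn φ (Ioc (0:ℝ) 1) := by
    intro y _ z _ h
    simp only [hφ] at h
    have := mul_left_cancel₀ hc.ne' (by linarith : (b - a) * y = (b - a) * z)
    exact this
  set g : ℝ → ℝ := fun v => (v - a) ^ (β - 1) * (b - v) ^ (α - 1) with hg
  have himg := affine_image hab
  have hEqOn : EqOn (fun y => |b - a| • g (φ y))
      (fun y => (b - a) ^ (α + β - 1) * (y ^ (β - 1) * (1 - y) ^ (α - 1))) (Ioc (0:ℝ) 1) := by
    intro y hy
    have hy0 : 0 ≤ y := hy.1.le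
    have hy1 : 0 ≤ 1 - y := by linarith [hy.2]
    simp only [hg, hφ, smul_eq_mul]
    have hpow : (b - a) * (b - a) ^ (β - 1) * (b - a) ^ (α - 1) = (b - a) ^ (α + β - 1) := by
      rw [show α + β - 1 = 1 + (β - 1) + (α - 1) by ring, Real.rpow_add hc,
        Real.rpow_add hc, Real.rpow_one]
    rw [abs_of_pos hc,
      show a + (b - a) * y - a = (b - a) * y by ring,
      show b - (a + (b - a) * y) = (b - a) * (1 - y) by ring,
      Real.mul_rpow hc.le hy0, Real.mul_rpow hc.le hy1, ← hpow]
    ring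
  constructor
  · rw [← himg]
    rw [integrableOn_image_iff_integrableOn_abs_deriv_smul measurableSet_Ioc hderiv hinj]
    have h1 : IntegrableOn (fun x : ℝ => (b - a) ^ (α + β - 1) * (x ^ (β - 1) * (1 - x) ^ (α - 1)))
        (Ioc (0:ℝ) 1) := (beta01_integrable hα hβ).const_mul _
    exact h1.congr_fun (fun y hy => (hEqOn hy).symm) measurableSet_Ioc
  · rw [← himg, integral_image_eq_integral_abs_deriv_smul measurableSet_Ioc hderiv hinj g,
      setIntegral_congr_fun measurableSet_Ioc hEqOn, MeasureTheory.integral_const_mul _ _,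
      beta01_integral hα hβ]
    ring

lemma sq_image {a b : ℝ} (ha : 0 ≤ a) (hab : a < b) :
    (fun s : ℝ => s ^ 2) '' Ioc a b = Ioc (a ^ 2) (b ^ 2) := by
  ext v
  simp only [mem_image, mem_Ioc]
  constructor
  · rintro ⟨s, ⟨hs1, hs2⟩, rfl⟩
    constructor <;> nlinarith
  · rintro ⟨hv1, hv2⟩
    have hv0 : 0 ≤ v := le_trans (by positivity) hv1.le
    refine ⟨Real.sqrt v, ⟨?_, ?_⟩, Real.sq_sqrt hv0⟩
    · have := Real.sqrt_lt_sqrt (by positivity) hv1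
      rwa [Real.sqrt_sq ha] at this
    · have := Real.sqrt_le_sqrt hv2
      rwa [Real.sqrt_sq (le_trans ha hab.le)] at this

lemma kernelI {α β : ℝ} (hα : 0 < α) (hβ : 0 < β) {a b : ℝ} (ha : 0 ≤ a) (hab : a < b) :
    IntegrableOn (fun s => s * ((s ^ 2 - a ^ 2) ^ (β - 1) * (b ^ 2 - s ^ 2) ^ (α - 1)))
      (Ioc a b) ∧
    ∫ s in Ioc a b, s * ((s ^ 2 - a ^ 2) ^ (β - 1) * (b ^ 2 - s ^ 2) ^ (α - 1))
      = Real.Gamma α * Real.Gamma β / Real.Gamma (α + β) / 2 * (b ^ 2 - a ^ 2) ^ (α + β - 1) := by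
  have hab2 : a ^ 2 < b ^ 2 := by nlinarith
  have hderiv : ∀ s ∈ Ioc a b, HasDerivWithinAt (fun s : ℝ => s ^ 2) (2 * s) (Ioc a b) s := by
    intro s _
    simpa using (hasDerivAt_pow 2 s).hasDerivWithinAt
  have hinj : InjOn (fun s : ℝ => s ^ 2) (Ioc a b) := by
    intro s hs s' hs' h
    simp only at h
    have h2 : (s - s') * (s + s') = 0 := by linear_combination h
    rcases mul_eq_zero.1 h2 with h3 | h3
    · linarith
    · have : 0 < s + s' := by
        have := hs.1; have := hs'.1; linarith [lt_of_le_of_lt ha hs.1, lt_of_le_of_lt ha hs'.1]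
      linarith
  set g : ℝ → ℝ := fun v => (v - a ^ 2) ^ (β - 1) * (b ^ 2 - v) ^ (α - 1) with hg
  have himg := sq_image ha hab
  obtain ⟨hint, hval⟩ := betaI_integral hα hβ hab2
  have hEqOn : EqOn (fun s => |2 * s| • g (s ^ 2))
      (fun s => 2 * (s * ((s ^ 2 - a ^ 2) ^ (β - 1) * (b ^ 2 - s ^ 2) ^ (α - 1))))
      (Ioc a b) := by
    intro s hs
    have hs0 : 0 < s := lt_of_le_of_lt ha hs.1
    simp only [hg, smul_eq_mul]
    rw [abs_of_pos (by linarith)]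
    ring
  constructor
  · have h1 : IntegrableOn (fun s => |2 * s| • g (s ^ 2)) (Ioc a b) := by
      rw [← integrableOn_image_iff_integrableOn_abs_deriv_smul measurableSet_Ioc hderiv hinj,
        himg]
      exact hint
    have h2 := h1.congr_fun hEqOn measurableSet_Ioc
    have h3 : IntegrableOn (fun s : ℝ =>
        2⁻¹ * (2 * (s * ((s ^ 2 - a ^ 2) ^ (β - 1) * (b ^ 2 - s ^ 2) ^ (α - 1)))))
        (Ioc a b) := h2.const_mul (2⁻¹ : ℝ)
    refine h3.congr_fun (fun s hs => ?_) measurableSet_Ioc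
    ring
  · have h1 : ∫ v in Ioc (a ^ 2) (b ^ 2), g v = ∫ s in Ioc a b, |2 * s| • g (s ^ 2) := by
      rw [← himg]
      exact integral_image_eq_integral_abs_deriv_smul measurableSet_Ioc hderiv hinj g
    rw [setIntegral_congr_fun measurableSet_Ioc hEqOn, MeasureTheory.integral_const_mul] at h1
    rw [hval] at h1
    linarith

/-- Left-sided modified Erdélyi–Kober fractional integral of order `α`. -/
noncomputable def EKplus (α : ℝ) (f : ℝ → ℝ) (t : ℝ) : ℝ :=
  2 * (Real.Gamma α)⁻¹ * ∫ s in Ioc (0 : ℝ) t, f s * s * (t ^ 2 - s ^ 2) ^ (α - 1)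

/-- Right-sided modified Erdélyi–Kober fractional integral of order `α`. -/
noncomputable def EKminus (α : ℝ) (f : ℝ → ℝ) (t : ℝ) : ℝ :=
  2 * (Real.Gamma α)⁻¹ * ∫ s in Ioi t, f s * s * (s ^ 2 - t ^ 2) ^ (α - 1)

lemma plus_eq (α β : ℝ) (hα : 0 < α) (hβ : 0 < β) (f : ℝ → ℝ)
    (hmeas : Measurable f) {t : ℝ} (ht : 0 < t)
    (habs : ∫⁻ s in Ioc (0 : ℝ) t,
      ENNReal.ofReal (|f s| * s * (t ^ 2 - s ^ 2) ^ (α + β - 1)) < ⊤) :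
    EKplus α (EKplus β f) t = EKplus (α + β) f t := by
  have hGamma_pos : ∀ γ : ℝ, 0 < γ → 0 < Real.Gamma γ := fun γ h => Real.Gamma_pos_of_pos h
  set c2 : ℝ := Real.Gamma α * Real.Gamma β / Real.Gamma (α + β) / 2 with hc2
  have hc2nn : 0 ≤ c2 := by
    have := hGamma_pos α hα; have := hGamma_pos β hβ
    have := hGamma_pos (α + β) (by linarith)
    positivity
  set G : ℝ → ℝ → ℝ := fun s u =>
    (Ioc (0:ℝ) s).indicator (fun u => f u * u * (s ^ 2 - u ^ 2) ^ (β - 1)) u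
      * (s * (t ^ 2 - s ^ 2) ^ (α - 1)) with hG
  -- measurability
  have hGmeas : Measurable (Function.uncurry G) := by
    have hset : MeasurableSet {q : ℝ × ℝ | q.2 ∈ Ioc 0 q.1} := by
      have : {q : ℝ × ℝ | q.2 ∈ Ioc 0 q.1}
          = {q : ℝ × ℝ | 0 < q.2} ∩ {q : ℝ × ℝ | q.2 ≤ q.1} := by
        ext q; simp [mem_Ioc, and_comm]
      rw [this]
      exact (measurableSet_lt measurable_const measurable_snd).inter
        (measurableSet_le measurable_snd measurable_fst)
    have heq : Function.uncurry G = fun p : ℝ × ℝ =>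
        ({q : ℝ × ℝ | q.2 ∈ Ioc 0 q.1}.indicator
          (fun q => f q.2 * q.2 * (q.1 ^ 2 - q.2 ^ 2) ^ (β - 1)) p)
          * (p.1 * (t ^ 2 - p.1 ^ 2) ^ (α - 1)) := by
      ext p
      by_cases h : p.2 ∈ Ioc 0 p.1
      · simp only [Function.uncurry, hG, Set.indicator_of_mem h,
          Set.indicator_of_mem (show p ∈ {q : ℝ × ℝ | q.2 ∈ Ioc 0 q.1} from h)]
      · simp only [Function.uncurry, hG, Set.indicator_of_notMem h,
          Set.indicator_of_notMem (show p ∉ {q : ℝ × ℝ | q.2 ∈ Ioc 0 q.1} from h)]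
    rw [heq]
    refine Measurable.mul (Measurable.indicator ?_ hset) ?_
    · exact ((hmeas.comp measurable_snd).mul measurable_snd).mul
        (((measurable_fst.pow_const 2).sub (measurable_snd.pow_const 2)).pow measurable_const)
    · exact measurable_fst.mul
        ((measurable_const.sub (measurable_fst.pow_const 2)).pow measurable_const)
  -- kernel facts for u in (0,t)
  have hker : ∀ u ∈ Ioo (0:ℝ) t,
      IntegrableOn (fun s => s * ((s ^ 2 - u ^ 2) ^ (β - 1) * (t ^ 2 - s ^ 2) ^ (α - 1)))
        (Ioc u t) ∧
      ∫ s in Ioc u t, s * ((s ^ 2 - u ^ 2) ^ (β - 1) * (t ^ 2 - s ^ 2) ^ (α - 1))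
        = c2 * (t ^ 2 - u ^ 2) ^ (α + β - 1) :=
    fun u hu => kernelI hα hβ hu.1.le hu.2
  have hmeas_kernel : ∀ u : ℝ, Measurable fun s : ℝ =>
      ENNReal.ofReal (s * ((s ^ 2 - u ^ 2) ^ (β - 1) * (t ^ 2 - s ^ 2) ^ (α - 1))) := by
    intro u
    exact ENNReal.measurable_ofReal.comp (measurable_id.mul
      ((((measurable_id.pow_const 2).sub measurable_const).pow measurable_const).mul
        ((measurable_const.sub (measurable_id.pow_const 2)).pow measurable_const)))
  have hnonneg_ae : ∀ u ∈ Ioo (0:ℝ) t, 0 ≤ᵐ[volume.restrict (Ioc u t)]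
      fun s => s * ((s ^ 2 - u ^ 2) ^ (β - 1) * (t ^ 2 - s ^ 2) ^ (α - 1)) := by
    intro u hu
    refine (ae_restrict_iff' measurableSet_Ioc).2 (ae_of_all _ fun s hs => ?_)
    have h1 : (0:ℝ) < u := hu.1
    exact mul_nonneg (by linarith [hs.1])
      (mul_nonneg (Real.rpow_nonneg (by nlinarith [hs.1]) _)
        (Real.rpow_nonneg (by nlinarith [hs.1, hs.2]) _))
  -- the key inner lintegral evaluation
  have hbound : ∀ u ∈ Ioo (0:ℝ) t,
      ∫⁻ s in Ioc (0:ℝ) t, ENNReal.ofReal ‖G s u‖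
        = ENNReal.ofReal c2 * ENNReal.ofReal (|f u| * u * (t ^ 2 - u ^ 2) ^ (α + β - 1)) := by
    intro u hu
    have hu0 : (0:ℝ) < u := hu.1
    have step1 : ∫⁻ s in Ioc (0:ℝ) t, ENNReal.ofReal ‖G s u‖
        = ∫⁻ s in Ioc (0:ℝ) t, (Icc u t).indicator
            (fun s => ENNReal.ofReal ((|f u| * u) *
              (s * ((s ^ 2 - u ^ 2) ^ (β - 1) * (t ^ 2 - s ^ 2) ^ (α - 1))))) s := by
      refine setLIntegral_congr_fun measurableSet_Ioc (fun s hs => ?_)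
      by_cases h : u ≤ s
      · have hmem : u ∈ Ioc (0:ℝ) s := ⟨hu0, h⟩
        have hmem' : s ∈ Icc u t := ⟨h, hs.2⟩
        rw [Set.indicator_of_mem hmem', hG]
        simp only [Set.indicator_of_mem hmem]
        rw [Real.norm_eq_abs]
        congr 1
        have h1 : (0:ℝ) ≤ s ^ 2 - u ^ 2 := by nlinarith [hu0.le]
        have h2 : (0:ℝ) ≤ t ^ 2 - s ^ 2 := by nlinarith [hs.1.le, hs.2]
        rw [abs_mul, abs_mul, abs_mul, abs_mul, abs_of_nonneg hu0.le,
          abs_of_nonneg (Real.rpow_nonneg h1 _), abs_of_nonneg hs.1.le,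
          abs_of_nonneg (Real.rpow_nonneg h2 _)]
        ring
      · have hmem : u ∉ Ioc (0:ℝ) s := fun hc => h hc.2
        have hmem' : s ∉ Icc u t := fun hc => h hc.1
        rw [Set.indicator_of_notMem hmem', hG]
        simp only [Set.indicator_of_notMem hmem]
        simp
    rw [step1, lintegral_indicator measurableSet_Icc,
      Measure.restrict_restrict measurableSet_Icc,
      show Icc u t ∩ Ioc (0:ℝ) t = Icc u t from
        Set.inter_eq_self_of_subset_left fun s hs => ⟨lt_of_lt_of_le hu0 hs.1, hs.2⟩,
      ← setLIntegral_congr (Ioc_ae_eq_Icc (a := u) (b := t))]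
    have hCnn : (0:ℝ) ≤ |f u| * u := mul_nonneg (abs_nonneg _) hu0.le
    simp_rw [ENNReal.ofReal_mul hCnn]
    rw [lintegral_const_mul _ (hmeas_kernel u),
      ← ofReal_integral_eq_lintegral_ofReal (hker u hu).1 (hnonneg_ae u hu), (hker u hu).2,
      ← ENNReal.ofReal_mul hCnn,
      show |f u| * u * (c2 * (t ^ 2 - u ^ 2) ^ (α + β - 1))
          = c2 * (|f u| * u * (t ^ 2 - u ^ 2) ^ (α + β - 1)) from by ring,
      ENNReal.ofReal_mul hc2nn, ENNReal.ofReal_mul hCnn]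
  have hmeasabs : Measurable fun u : ℝ =>
      ENNReal.ofReal (|f u| * u * (t ^ 2 - u ^ 2) ^ (α + β - 1)) :=
    ENNReal.measurable_ofReal.comp ((hmeas.abs.mul measurable_id).mul
      ((measurable_const.sub (measurable_id.pow_const 2)).pow measurable_const))
  -- integrability on the product
  have hGint : Integrable (Function.uncurry G)
      ((volume.restrict (Ioc (0:ℝ) t)).prod (volume.restrict (Ioc (0:ℝ) t))) := by
    refine ⟨hGmeas.aestronglyMeasurable, ?_⟩
    rw [hasFiniteIntegral_iff_norm,
      lintegral_prod_symm (fun z => ENNReal.ofReal ‖Function.uncurry G z‖)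
        hGmeas.norm.ennreal_ofReal.aemeasurable]
    have hout : ∫⁻ u in Ioc (0:ℝ) t, ∫⁻ s in Ioc (0:ℝ) t,
          ENNReal.ofReal ‖Function.uncurry G (s, u)‖
        = ∫⁻ u in Ioo (0:ℝ) t, ∫⁻ s in Ioc (0:ℝ) t, ENNReal.ofReal ‖G s u‖ :=
      (setLIntegral_congr (Ioo_ae_eq_Ioc (a := (0:ℝ)) (b := t))).symm
    rw [hout,
      setLIntegral_congr_fun measurableSet_Ioo (fun u hu => hbound u hu),
      lintegral_const_mul _ hmeasabs]
    exact ENNReal.mul_lt_top ENNReal.ofReal_lt_top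
      (lt_of_le_of_lt (lintegral_mono_set Ioo_subset_Ioc_self) habs)
  have hswap := integral_integral_swap (f := G) hGint
  have hLHS : EKplus α (EKplus β f) t
      = (2 * (Real.Gamma α)⁻¹) * ((2 * (Real.Gamma β)⁻¹) *
        ∫ s in Ioc (0:ℝ) t, ∫ u in Ioc (0:ℝ) t, G s u) := by
    rw [EKplus]
    congr 1
    rw [← MeasureTheory.integral_const_mul]
    refine setIntegral_congr_fun measurableSet_Ioc (fun s hs => ?_)
    have inner_eq : ∫ u in Ioc (0:ℝ) t, G s u
        = (∫ u in Ioc (0:ℝ) s, f u * u * (s ^ 2 - u ^ 2) ^ (β - 1))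
            * (s * (t ^ 2 - s ^ 2) ^ (α - 1)) := by
      have hpt : ∀ u, G s u = (Ioc (0:ℝ) s).indicator
          (fun u => f u * u * (s ^ 2 - u ^ 2) ^ (β - 1)
            * (s * (t ^ 2 - s ^ 2) ^ (α - 1))) u := by
        intro u
        by_cases h : u ∈ Ioc (0:ℝ) s
        · rw [hG]; simp only [Set.indicator_of_mem h]
        · rw [hG]; simp only [Set.indicator_of_notMem h, zero_mul]
      simp_rw [hpt]
      rw [MeasureTheory.integral_indicator measurableSet_Ioc,
        Measure.restrict_restrict measurableSet_Ioc,
        show Ioc (0:ℝ) s ∩ Ioc (0:ℝ) t = Ioc (0:ℝ) s from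
          Set.inter_eq_self_of_subset_left (Ioc_subset_Ioc_right hs.2),
        MeasureTheory.integral_mul_const]
    rw [inner_eq, EKplus]
    ring
  have hEval : ∀ u ∈ Ioo (0:ℝ) t, ∫ s in Ioc (0:ℝ) t, G s u
      = c2 * (f u * u * (t ^ 2 - u ^ 2) ^ (α + β - 1)) := by
    intro u hu
    have hu0 : (0:ℝ) < u := hu.1
    have h1 : ∀ s ∈ Ioc (0:ℝ) t, G s u = (Icc u t).indicator
        (fun s => f u * u
          * ((s ^ 2 - u ^ 2) ^ (β - 1) * (s * (t ^ 2 - s ^ 2) ^ (α - 1)))) s := by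
      intro s hs
      by_cases h : u ≤ s
      · rw [hG, Set.indicator_of_mem (show s ∈ Icc u t from ⟨h, hs.2⟩)]
        simp only [Set.indicator_of_mem (show u ∈ Ioc (0:ℝ) s from ⟨hu0, h⟩)]
        ring
      · rw [hG, Set.indicator_of_notMem (show s ∉ Icc u t from fun hc => h hc.1)]
        simp only [Set.indicator_of_notMem
          (show u ∉ Ioc (0:ℝ) s from fun hc => h hc.2), zero_mul]
    rw [setIntegral_congr_fun measurableSet_Ioc h1,
      MeasureTheory.integral_indicator measurableSet_Icc,
      Measure.restrict_restrict measurableSet_Icc,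
      show Icc u t ∩ Ioc (0:ℝ) t = Icc u t from
        Set.inter_eq_self_of_subset_left fun s hs => ⟨lt_of_lt_of_le hu0 hs.1, hs.2⟩,
      integral_Icc_eq_integral_Ioc]
    have h2 : ∀ s ∈ Ioc u t,
        f u * u * ((s ^ 2 - u ^ 2) ^ (β - 1) * (s * (t ^ 2 - s ^ 2) ^ (α - 1)))
          = (f u * u) * (s * ((s ^ 2 - u ^ 2) ^ (β - 1) * (t ^ 2 - s ^ 2) ^ (α - 1))) :=
      fun s _ => by ring
    rw [setIntegral_congr_fun measurableSet_Ioc h2, MeasureTheory.integral_const_mul,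
      (hker u hu).2]
    ring
  have key : ∫ u in Ioc (0:ℝ) t, ∫ s in Ioc (0:ℝ) t, G s u
      = c2 * ∫ u in Ioc (0:ℝ) t, f u * u * (t ^ 2 - u ^ 2) ^ (α + β - 1) := by
    calc ∫ u in Ioc (0:ℝ) t, ∫ s in Ioc (0:ℝ) t, G s u
        = ∫ u in Ioo (0:ℝ) t, ∫ s in Ioc (0:ℝ) t, G s u :=
          (setIntegral_congr_set (Ioo_ae_eq_Ioc (a := (0:ℝ)) (b := t))).symm
      _ = ∫ u in Ioo (0:ℝ) t, c2 * (f u * u * (t ^ 2 - u ^ 2) ^ (α + β - 1)) :=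
          setIntegral_congr_fun measurableSet_Ioo hEval
      _ = c2 * ∫ u in Ioo (0:ℝ) t, f u * u * (t ^ 2 - u ^ 2) ^ (α + β - 1) :=
          MeasureTheory.integral_const_mul _ _
      _ = c2 * ∫ u in Ioc (0:ℝ) t, f u * u * (t ^ 2 - u ^ 2) ^ (α + β - 1) := by
          rw [setIntegral_congr_set (Ioo_ae_eq_Ioc (a := (0:ℝ)) (b := t))]
  have hconst : (2 * (Real.Gamma α)⁻¹) * ((2 * (Real.Gamma β)⁻¹) * c2)
      = 2 * (Real.Gamma (α + β))⁻¹ := by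
    have h1 : Real.Gamma α ≠ 0 := (hGamma_pos α hα).ne'
    have h2 : Real.Gamma β ≠ 0 := (hGamma_pos β hβ).ne'
    have h3 : Real.Gamma (α + β) ≠ 0 := (hGamma_pos (α + β) (by linarith)).ne'
    rw [hc2]; field_simp
  rw [hLHS, hswap, key, EKplus]
  linear_combination (∫ u in Ioc (0:ℝ) t, f u * u * (t ^ 2 - u ^ 2) ^ (α + β - 1)) * hconst

lemma minus_eq (α β : ℝ) (hα : 0 < α) (hβ : 0 < β) (f : ℝ → ℝ)
    (hmeas : Measurable f) {t : ℝ} (ht : 0 < t)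
    (habs : ∫⁻ s in Ioi t,
      ENNReal.ofReal (|f s| * s * (s ^ 2 - t ^ 2) ^ (α + β - 1)) < ⊤) :
    EKminus α (EKminus β f) t = EKminus (α + β) f t := by
  have hGamma_pos : ∀ γ : ℝ, 0 < γ → 0 < Real.Gamma γ := fun γ h => Real.Gamma_pos_of_pos h
  set c2 : ℝ := Real.Gamma α * Real.Gamma β / Real.Gamma (α + β) / 2 with hc2
  have hc2nn : 0 ≤ c2 := by
    have := hGamma_pos α hα; have := hGamma_pos β hβ
    have := hGamma_pos (α + β) (by linarith)
    positivity
  set G : ℝ → ℝ → ℝ := fun s u =>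
    (Ioi s).indicator (fun u => f u * u * (u ^ 2 - s ^ 2) ^ (β - 1)) u
      * (s * (s ^ 2 - t ^ 2) ^ (α - 1)) with hG
  have hGmeas : Measurable (Function.uncurry G) := by
    have hset : MeasurableSet {q : ℝ × ℝ | q.2 ∈ Ioi q.1} :=
      measurableSet_lt measurable_fst measurable_snd
    have heq : Function.uncurry G = fun p : ℝ × ℝ =>
        ({q : ℝ × ℝ | q.2 ∈ Ioi q.1}.indicator
          (fun q => f q.2 * q.2 * (q.2 ^ 2 - q.1 ^ 2) ^ (β - 1)) p)
          * (p.1 * (p.1 ^ 2 - t ^ 2) ^ (α - 1)) := by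
      ext p
      by_cases h : p.2 ∈ Ioi p.1
      · simp only [Function.uncurry, hG, Set.indicator_of_mem h,
          Set.indicator_of_mem (show p ∈ {q : ℝ × ℝ | q.2 ∈ Ioi q.1} from h)]
      · simp only [Function.uncurry, hG, Set.indicator_of_notMem h,
          Set.indicator_of_notMem (show p ∉ {q : ℝ × ℝ | q.2 ∈ Ioi q.1} from h)]
    rw [heq]
    refine Measurable.mul (Measurable.indicator ?_ hset) ?_
    · exact ((hmeas.comp measurable_snd).mul measurable_snd).mul
        (((measurable_snd.pow_const 2).sub (measurable_fst.pow_const 2)).pow measurable_const)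
    · exact measurable_fst.mul
        (((measurable_fst.pow_const 2).sub measurable_const).pow measurable_const)
  have hker : ∀ u ∈ Ioi t,
      IntegrableOn (fun s => s * ((s ^ 2 - t ^ 2) ^ (α - 1) * (u ^ 2 - s ^ 2) ^ (β - 1)))
        (Ioc t u) ∧
      ∫ s in Ioc t u, s * ((s ^ 2 - t ^ 2) ^ (α - 1) * (u ^ 2 - s ^ 2) ^ (β - 1))
        = c2 * (u ^ 2 - t ^ 2) ^ (α + β - 1) := by
    intro u hu
    have h := kernelI hβ hα ht.le hu
    refine ⟨h.1, ?_⟩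
    rw [h.2, add_comm β α, hc2]
    ring
  have hmeas_kernel : ∀ u : ℝ, Measurable fun s : ℝ =>
      ENNReal.ofReal (s * ((s ^ 2 - t ^ 2) ^ (α - 1) * (u ^ 2 - s ^ 2) ^ (β - 1))) := by
    intro u
    exact ENNReal.measurable_ofReal.comp (measurable_id.mul
      ((((measurable_id.pow_const 2).sub measurable_const).pow measurable_const).mul
        ((measurable_const.sub (measurable_id.pow_const 2)).pow measurable_const)))
  have hnonneg_ae : ∀ u ∈ Ioi t, 0 ≤ᵐ[volume.restrict (Ioc t u)]
      fun s => s * ((s ^ 2 - t ^ 2) ^ (α - 1) * (u ^ 2 - s ^ 2) ^ (β - 1)) := by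
    intro u hu
    refine (ae_restrict_iff' measurableSet_Ioc).2 (ae_of_all _ fun s hs => ?_)
    exact mul_nonneg (by linarith [hs.1])
      (mul_nonneg (Real.rpow_nonneg (by nlinarith [hs.1, ht.le]) _)
        (Real.rpow_nonneg (by nlinarith [hs.1, hs.2, ht.le]) _))
  have hbound : ∀ u ∈ Ioi t,
      ∫⁻ s in Ioi t, ENNReal.ofReal ‖G s u‖
        = ENNReal.ofReal c2 * ENNReal.ofReal (|f u| * u * (u ^ 2 - t ^ 2) ^ (α + β - 1)) := by
    intro u hu
    have hu0 : (0:ℝ) < u := lt_trans ht hu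
    have step1 : ∫⁻ s in Ioi t, ENNReal.ofReal ‖G s u‖
        = ∫⁻ s in Ioi t, (Iio u).indicator
            (fun s => ENNReal.ofReal ((|f u| * u) *
              (s * ((s ^ 2 - t ^ 2) ^ (α - 1) * (u ^ 2 - s ^ 2) ^ (β - 1))))) s := by
      refine setLIntegral_congr_fun measurableSet_Ioi (fun s hs => ?_)
      by_cases h : s < u
      · have hmem : u ∈ Ioi s := h
        have hmem' : s ∈ Iio u := h
        rw [Set.indicator_of_mem hmem', hG]
        simp only [Set.indicator_of_mem hmem]
        rw [Real.norm_eq_abs]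
        congr 1
        have hs0 : (0:ℝ) < s := lt_trans ht hs
        have h1 : (0:ℝ) ≤ u ^ 2 - s ^ 2 := by nlinarith
        have h2 : (0:ℝ) ≤ s ^ 2 - t ^ 2 := by nlinarith [show t < s from hs, ht.le]
        rw [abs_mul, abs_mul, abs_mul, abs_mul, abs_of_nonneg hu0.le,
          abs_of_nonneg (Real.rpow_nonneg h1 _), abs_of_nonneg hs0.le,
          abs_of_nonneg (Real.rpow_nonneg h2 _)]
        ring
      · have hmem : u ∉ Ioi s := h
        have hmem' : s ∉ Iio u := h
        rw [Set.indicator_of_notMem hmem', hG]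
        simp only [Set.indicator_of_notMem hmem]
        simp
    rw [step1, lintegral_indicator measurableSet_Iio,
      Measure.restrict_restrict measurableSet_Iio,
      show Iio u ∩ Ioi t = Ioo t u from by ext x; simp [mem_Ioo, and_comm],
      setLIntegral_congr (Ioo_ae_eq_Ioc (a := t) (b := u))]
    have hCnn : (0:ℝ) ≤ |f u| * u := mul_nonneg (abs_nonneg _) hu0.le
    simp_rw [ENNReal.ofReal_mul hCnn]
    rw [lintegral_const_mul _ (hmeas_kernel u),
      ← ofReal_integral_eq_lintegral_ofReal (hker u hu).1 (hnonneg_ae u hu), (hker u hu).2,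
      ← ENNReal.ofReal_mul hCnn,
      show |f u| * u * (c2 * (u ^ 2 - t ^ 2) ^ (α + β - 1))
          = c2 * (|f u| * u * (u ^ 2 - t ^ 2) ^ (α + β - 1)) from by ring,
      ENNReal.ofReal_mul hc2nn, ENNReal.ofReal_mul hCnn]
  have hmeasabs : Measurable fun u : ℝ =>
      ENNReal.ofReal (|f u| * u * (u ^ 2 - t ^ 2) ^ (α + β - 1)) :=
    ENNReal.measurable_ofReal.comp ((hmeas.abs.mul measurable_id).mul
      (((measurable_id.pow_const 2).sub measurable_const).pow measurable_const))
  have hGint : Integrable (Function.uncurry G)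
      ((volume.restrict (Ioi t)).prod (volume.restrict (Ioi t))) := by
    refine ⟨hGmeas.aestronglyMeasurable, ?_⟩
    rw [hasFiniteIntegral_iff_norm,
      lintegral_prod_symm (fun z => ENNReal.ofReal ‖Function.uncurry G z‖)
        hGmeas.norm.ennreal_ofReal.aemeasurable]
    rw [show (∫⁻ u in Ioi t, ∫⁻ s in Ioi t, ENNReal.ofReal ‖Function.uncurry G (s, u)‖)
        = ∫⁻ u in Ioi t, ∫⁻ s in Ioi t, ENNReal.ofReal ‖G s u‖ from rfl]
    rw [setLIntegral_congr_fun measurableSet_Ioi (fun u hu => hbound u hu),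
      lintegral_const_mul _ hmeasabs]
    exact ENNReal.mul_lt_top ENNReal.ofReal_lt_top habs
  have hswap := integral_integral_swap (f := G) hGint
  have hLHS : EKminus α (EKminus β f) t
      = (2 * (Real.Gamma α)⁻¹) * ((2 * (Real.Gamma β)⁻¹) *
        ∫ s in Ioi t, ∫ u in Ioi t, G s u) := by
    rw [EKminus]
    congr 1
    rw [← MeasureTheory.integral_const_mul]
    refine setIntegral_congr_fun measurableSet_Ioi (fun s hs => ?_)
    have inner_eq : ∫ u in Ioi t, G s u
        = (∫ u in Ioi s, f u * u * (u ^ 2 - s ^ 2) ^ (β - 1))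
            * (s * (s ^ 2 - t ^ 2) ^ (α - 1)) := by
      have hpt : ∀ u, G s u = (Ioi s).indicator
          (fun u => f u * u * (u ^ 2 - s ^ 2) ^ (β - 1)
            * (s * (s ^ 2 - t ^ 2) ^ (α - 1))) u := by
        intro u
        by_cases h : u ∈ Ioi s
        · rw [hG]; simp only [Set.indicator_of_mem h]
        · rw [hG]; simp only [Set.indicator_of_notMem h, zero_mul]
      simp_rw [hpt]
      rw [MeasureTheory.integral_indicator measurableSet_Ioi,
        Measure.restrict_restrict measurableSet_Ioi,
        show Ioi s ∩ Ioi t = Ioi s from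
          Set.inter_eq_self_of_subset_left (Ioi_subset_Ioi (le_of_lt hs)),
        MeasureTheory.integral_mul_const]
    rw [inner_eq, EKminus]
    ring
  have hEval : ∀ u ∈ Ioi t, ∫ s in Ioi t, G s u
      = c2 * (f u * u * (u ^ 2 - t ^ 2) ^ (α + β - 1)) := by
    intro u hu
    have h1 : ∀ s ∈ Ioi t, G s u = (Iio u).indicator
        (fun s => f u * u
          * ((u ^ 2 - s ^ 2) ^ (β - 1) * (s * (s ^ 2 - t ^ 2) ^ (α - 1)))) s := by
      intro s hs
      by_cases h : s < u
      · rw [hG, Set.indicator_of_mem (show s ∈ Iio u from h)]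
        simp only [Set.indicator_of_mem (show u ∈ Ioi s from h)]
        ring
      · rw [hG, Set.indicator_of_notMem (show s ∉ Iio u from h)]
        simp only [Set.indicator_of_notMem (show u ∉ Ioi s from h), zero_mul]
    rw [setIntegral_congr_fun measurableSet_Ioi h1,
      MeasureTheory.integral_indicator measurableSet_Iio,
      Measure.restrict_restrict measurableSet_Iio,
      show Iio u ∩ Ioi t = Ioo t u from by ext x; simp [mem_Ioo, and_comm],
      ← integral_Ioc_eq_integral_Ioo]
    have h2 : ∀ s ∈ Ioc t u,
        f u * u * ((u ^ 2 - s ^ 2) ^ (β - 1) * (s * (s ^ 2 - t ^ 2) ^ (α - 1)))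
          = (f u * u) * (s * ((s ^ 2 - t ^ 2) ^ (α - 1) * (u ^ 2 - s ^ 2) ^ (β - 1))) :=
      fun s _ => by ring
    rw [setIntegral_congr_fun measurableSet_Ioc h2, MeasureTheory.integral_const_mul,
      (hker u hu).2]
    ring
  have key : ∫ u in Ioi t, ∫ s in Ioi t, G s u
      = c2 * ∫ u in Ioi t, f u * u * (u ^ 2 - t ^ 2) ^ (α + β - 1) := by
    rw [setIntegral_congr_fun measurableSet_Ioi hEval, MeasureTheory.integral_const_mul]
  have hconst : (2 * (Real.Gamma α)⁻¹) * ((2 * (Real.Gamma β)⁻¹) * c2)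
      = 2 * (Real.Gamma (α + β))⁻¹ := by
    have h1 : Real.Gamma α ≠ 0 := (hGamma_pos α hα).ne'
    have h2 : Real.Gamma β ≠ 0 := (hGamma_pos β hβ).ne'
    have h3 : Real.Gamma (α + β) ≠ 0 := (hGamma_pos (α + β) (by linarith)).ne'
    rw [hc2]; field_simp
  rw [hLHS, hswap, key, EKminus]
  linear_combination (∫ u in Ioi t, f u * u * (u ^ 2 - t ^ 2) ^ (α + β - 1)) * hconst

/-- Semigroup property `I^α_{±,2} (I^β_{±,2} f) = I^{α+β}_{±,2} f` a.e. on `(0,∞)`,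
provided all integrals converge absolutely. -/
theorem ek_semigroup (α β : ℝ) (hα : 0 < α) (hβ : 0 < β) (f : ℝ → ℝ)
    (hmeas : Measurable f)
    (habsPlus : ∀ t > (0 : ℝ),
      ∫⁻ s in Ioc (0 : ℝ) t, ENNReal.ofReal (|f s| * s * (t ^ 2 - s ^ 2) ^ (α + β - 1)) < ⊤)
    (habsMinus : ∀ t > (0 : ℝ),
      ∫⁻ s in Ioi t, ENNReal.ofReal (|f s| * s * (s ^ 2 - t ^ 2) ^ (α + β - 1)) < ⊤) :
    (∀ᵐ t ∂(volume.restrict (Ioi (0 : ℝ))),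
      EKplus α (EKplus β f) t = EKplus (α + β) f t) ∧
    (∀ᵐ t ∂(volume.restrict (Ioi (0 : ℝ))),
      EKminus α (EKminus β f) t = EKminus (α + β) f t) := by
  constructor
  · rw [ae_restrict_iff' measurableSet_Ioi]
    exact ae_of_all _ fun t ht => plus_eq α β hα hβ f hmeas ht (habsPlus t ht)
  · rw [ae_restrict_iff' measurableSet_Ioi]
    exact ae_of_all _ fun t ht => minus_eq α β hα hβ f hmeas ht (habsMinus t ht)
end

section
/- For α > 0, s > t > 0, the kernel integral I(s,t) = s·t · ∫_t^s (s²-r²)^{α-1} (r²-t²)^{α-1} r^{-2α} dr equals 2^{2α-2} Γ(α)² (s-t)^{2α-1} / Γ(2α). -/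
open MeasureTheory Real Set

lemma beta_integrable {α : ℝ} (hα : 0 < α) :
    IntegrableOn (fun v : ℝ => v ^ (α-1) * (1-v) ^ (α-1)) (Ioo (0:ℝ) 1) := by
  have h := Complex.betaIntegral_convergent (u := (α:ℂ)) (v := (α:ℂ)) (by simpa) (by simpa)
  rw [intervalIntegrable_iff_integrableOn_Ioc_of_le zero_le_one] at h
  have h2 : IntegrableOn (fun v : ℝ => ((v ^ (α-1) * (1-v) ^ (α-1) : ℝ) : ℂ)) (Ioc (0:ℝ) 1) := by
    refine h.congr_fun ?_ measurableSet_Ioc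
    intro x hx
    push_cast
    rw [Complex.ofReal_cpow hx.1.le, Complex.ofReal_cpow (by linarith [hx.2] : (0:ℝ) ≤ 1 - x)]
    push_cast
    ring
  have h3 : IntegrableOn (fun v : ℝ => v ^ (α-1) * (1-v) ^ (α-1)) (Ioc (0:ℝ) 1) := by
    have := h2.re; simpa [IntegrableOn] using this
  exact h3.mono_set Ioo_subset_Ioc_self

lemma beta_eval {α : ℝ} (hα : 0 < α) :
    ∫ v in Ioo (0:ℝ) 1, v ^ (α-1) * (1-v) ^ (α-1)
      = Real.Gamma α ^ 2 / Real.Gamma (2 * α) := by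
  have key := Complex.Gamma_mul_Gamma_eq_betaIntegral (s := (α:ℂ)) (t := (α:ℂ)) (by simpa) (by simpa)
  have hbeta : Complex.betaIntegral α α
      = ((∫ x in (0:ℝ)..1, x ^ (α-1) * (1-x) ^ (α-1) : ℝ) : ℂ) := by
    rw [Complex.betaIntegral, ← intervalIntegral.integral_ofReal]
    refine intervalIntegral.integral_congr fun x hx => ?_
    rw [uIcc_of_le zero_le_one] at hx
    push_cast
    rw [Complex.ofReal_cpow hx.1, Complex.ofReal_cpow (by linarith [hx.2] : (0:ℝ) ≤ 1 - x)]
    push_cast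
    ring
  rw [intervalIntegral.integral_of_le zero_le_one, integral_Ioc_eq_integral_Ioo] at hbeta
  rw [hbeta] at key
  have hg : (Complex.Gamma (α + α)) = (Real.Gamma (2*α) : ℂ) := by
    rw [← Complex.ofReal_add, Complex.Gamma_ofReal]; norm_num; ring_nf
  have hga : (Complex.Gamma α) = (Real.Gamma α : ℂ) := Complex.Gamma_ofReal α
  rw [hg, hga] at key
  have h2 : Real.Gamma (2*α) ≠ 0 := (Real.Gamma_pos_of_pos (by linarith)).ne'
  have : (Real.Gamma α * Real.Gamma α : ℝ) = Real.Gamma (2*α) * ∫ v in Ioo (0:ℝ) 1, v ^ (α-1) * (1-v) ^ (α-1) := by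
    exact_mod_cast key
  rw [sq]
  field_simp [this]
  rw [mul_comm α 2, sq, this]; ring


set_option maxHeartbeats 2000000 in
/-- For `α > 0` and `s > t > 0`, the kernel integral
`I(s,t) = s t ∫_t^s (s²-r²)^{α-1} (r²-t²)^{α-1} r^{-2α} dr`
equals `2^{2α-2} Γ(α)² (s-t)^{2α-1} / Γ(2α)`. -/
theorem kernel_integral_eval (α s t : ℝ) (hα : 0 < α) (ht : 0 < t) (hts : t < s) :
    s * t * ∫ r in Ioo t s, (s ^ 2 - r ^ 2) ^ (α - 1) * (r ^ 2 - t ^ 2) ^ (α - 1)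
        * r ^ (-(2 * α))
      = 2 ^ (2 * α - 2) * (Real.Gamma α) ^ 2 * (s - t) ^ (2 * α - 1)
          / Real.Gamma (2 * α) := by
  have hs : 0 < s := ht.trans hts
  set c : ℝ := s - t with hc_def
  have hc : 0 < c := by simp [hc_def]; linarith
  set f : ℝ → ℝ := fun w => (c ^ 2 - w ^ 2) ^ (α - 1) with hf_def
  set φ : ℝ → ℝ := fun r => r - s * t / r with hφ_def
  -- basic facts about φ on Ioo t s
  have hφlt : ∀ r ∈ Ioo t s, -c < φ r ∧ φ r < c := by
    intro r hr
    have hr0 : 0 < r := ht.trans hr.1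
    constructor
    · have key : (φ r + c) * r = (r - t) * (r + s) := by
        simp only [hφ_def, hc_def]; field_simp; ring
      nlinarith [hr.1, hr.2, mul_pos (sub_pos.mpr hr.1) (by linarith : (0:ℝ) < r + s)]
    · have key : (c - φ r) * r = (s - r) * (r + t) := by
        simp only [hφ_def, hc_def]; field_simp; ring
      nlinarith [mul_pos (sub_pos.mpr hr.2) (by linarith : (0:ℝ) < r + t)]
  have hφmono : StrictMonoOn φ (Ioo t s) := by
    intro x hx y hy hxy
    have hx0 : 0 < x := ht.trans hx.1
    have hy0 : 0 < y := ht.trans hy.1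
    have key : φ y - φ x = (y - x) * (x * y + s * t) / (x * y) := by
      simp only [hφ_def]; field_simp; ring
    have : 0 < φ y - φ x := by
      rw [key]
      exact div_pos (mul_pos (by linarith) (by positivity)) (by positivity)
    linarith
  have hφinj : InjOn φ (Ioo t s) := hφmono.injOn
  have hφcont : ContinuousOn φ (Icc t s) := by
    apply ContinuousOn.sub continuousOn_id
    exact ContinuousOn.div continuousOn_const continuousOn_id
      (fun x hx => ne_of_gt (lt_of_lt_of_le ht hx.1))
  have hφimg : φ '' Ioo t s = Ioo (-c) c := by
    apply Subset.antisymm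
    · rintro w ⟨r, hr, rfl⟩
      exact ⟨(hφlt r hr).1, (hφlt r hr).2⟩
    · have h1 : φ t = -c := by simp only [hφ_def, hc_def]; field_simp; ring
      have h2 : φ s = c := by simp only [hφ_def, hc_def]; field_simp
      have := intermediate_value_Ioo hts.le hφcont
      rwa [h1, h2] at this
  have hφderiv : ∀ r ∈ Ioo t s, HasDerivWithinAt φ (1 + s * t / r ^ 2) (Ioo t s) r := by
    intro r hr
    have hr0 : 0 < r := ht.trans hr.1
    have h1 : HasDerivAt (fun x : ℝ => s * t * x⁻¹) (s * t * (-(r ^ 2)⁻¹)) r :=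
      (hasDerivAt_inv hr0.ne').const_mul (s * t)
    have h2 : HasDerivAt φ (1 - s * t * (-(r ^ 2)⁻¹)) r := by
      simpa [hφ_def, div_eq_mul_inv] using (show HasDerivAt (fun x => x - s * t * x⁻¹) (1 - s * t * (-(r ^ 2)⁻¹)) r from (hasDerivAt_id' r).sub h1)
    have h3 : (1 : ℝ) - s * t * (-(r ^ 2)⁻¹) = 1 + s * t / r ^ 2 := by
      field_simp
      ring
    rw [h3] at h2
    exact h2.hasDerivWithinAt
  -- change of variables r ↦ φ r
  have stepB : ∫ w in Ioo (-c) c, f w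
      = ∫ r in Ioo t s, |1 + s * t / r ^ 2| • f (φ r) := by
    rw [← hφimg]
    exact integral_image_eq_integral_abs_deriv_smul measurableSet_Ioo hφderiv hφinj f
  set ψ : ℝ → ℝ := fun r => s * t / r with hψ_def
  have hψmem : ∀ r ∈ Ioo t s, ψ r ∈ Ioo t s := by
    intro r hr
    have hr0 : 0 < r := ht.trans hr.1
    constructor
    · rw [hψ_def]; rw [lt_div_iff₀ hr0]; nlinarith [hr.2]
    · rw [hψ_def]; rw [div_lt_iff₀ hr0]; nlinarith [hr.1]
  have hψimg : ψ '' Ioo t s = Ioo t s := by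
    apply Subset.antisymm
    · rintro w ⟨r, hr, rfl⟩; exact hψmem r hr
    · intro x hx
      have hx0 : 0 < x := ht.trans hx.1
      refine ⟨s * t / x, ?_, ?_⟩
      · constructor
        · rw [lt_div_iff₀ hx0]; nlinarith [hx.2]
        · rw [div_lt_iff₀ hx0]; nlinarith [hx.1]
      · rw [hψ_def]
        field_simp
  have hψinj : InjOn ψ (Ioo t s) := by
    intro x hx y hy hxy
    have hx0 : 0 < x := ht.trans hx.1
    have hy0 : 0 < y := ht.trans hy.1
    have hst : 0 < s * t := mul_pos hs ht
    rw [hψ_def] at hxy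
    field_simp at hxy
    exact hxy.symm
  have hψderiv : ∀ r ∈ Ioo t s, HasDerivWithinAt ψ (-(s * t / r ^ 2)) (Ioo t s) r := by
    intro r hr
    have hr0 : 0 < r := ht.trans hr.1
    have h1 : HasDerivAt (fun x : ℝ => s * t * x⁻¹) (s * t * (-(r ^ 2)⁻¹)) r :=
      (hasDerivAt_inv hr0.ne').const_mul (s * t)
    have h3 : s * t * (-(r ^ 2)⁻¹) = -(s * t / r ^ 2) := by field_simp
    have h2 : HasDerivAt ψ (-(s * t / r ^ 2)) r := by
      rw [← h3]; simpa [hψ_def, div_eq_mul_inv] using h1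
    exact h2.hasDerivWithinAt
  -- symmetry: ∫ f ∘ φ = ∫ (st/r²) f ∘ φ
  have hφψ : ∀ r ∈ Ioo t s, f (φ (ψ r)) = f (φ r) := by
    intro r hr
    have hr0 : 0 < r := ht.trans hr.1
    have hst : 0 < s * t := mul_pos hs ht
    have h1 : φ (ψ r) = -(φ r) := by
      rw [hφ_def, hψ_def]
      field_simp
      ring
    rw [h1, hf_def]
    simp [neg_sq]
  have stepC : ∫ r in Ioo t s, f (φ r)
      = ∫ r in Ioo t s, (s * t / r ^ 2) * f (φ r) := by
    conv_lhs => rw [← hψimg]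
    rw [integral_image_eq_integral_abs_deriv_smul measurableSet_Ioo hψderiv hψinj
      (fun r => f (φ r))]
    refine setIntegral_congr_fun measurableSet_Ioo (fun r hr => ?_)
    have hr0 : 0 < r := ht.trans hr.1
    rw [hφψ r hr]
    rw [abs_neg, abs_of_pos (by positivity : (0:ℝ) < s * t / r ^ 2)]
    simp [smul_eq_mul]
  -- affine substitution to beta integral
  set A : ℝ := (2:ℝ) ^ (2*α-1) * c ^ (2*α-1) with hA_def
  set φ₂ : ℝ → ℝ := fun v => 2*c*v - c with hφ₂_def
  have hderiv2 : ∀ v ∈ Ioo (0:ℝ) 1, HasDerivWithinAt φ₂ (2*c) (Ioo (0:ℝ) 1) v := by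
    intro v hv
    have : HasDerivAt φ₂ (2*c) v := by
      simpa only [mul_one] using ((hasDerivAt_id' v).const_mul (2*c)).sub_const c
    exact this.hasDerivWithinAt
  have hinj2 : InjOn φ₂ (Ioo (0:ℝ) 1) := by
    intro x _ y _ h
    rw [hφ₂_def] at h
    simp only [sub_left_inj] at h
    exact mul_left_cancel₀ (by positivity : (0:ℝ) < 2*c).ne' h
  have himg2 : φ₂ '' Ioo (0:ℝ) 1 = Ioo (-c) c := by
    apply Subset.antisymm
    · rintro w ⟨v, hv, rfl⟩
      constructor
      · simp only [hφ₂_def]; nlinarith [hv.1]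
      · simp only [hφ₂_def]; nlinarith [hv.2]
    · intro w hw
      refine ⟨(w + c) / (2*c), ⟨?_, ?_⟩, ?_⟩
      · apply div_pos (by linarith [hw.1]) (by positivity)
      · rw [div_lt_one (by positivity)]; linarith [hw.2]
      · rw [hφ₂_def]; field_simp; ring
  have P2 : ∀ v ∈ Ioo (0:ℝ) 1,
      |2*c| • f (φ₂ v) = A * (v ^ (α-1) * (1-v) ^ (α-1)) := by
    intro v hv
    have hv0 : 0 < v := hv.1
    have hv1 : v < 1 := hv.2
    have hbase : c^2 - (φ₂ v)^2 = (2*c)^2 * (v * (1-v)) := by rw [hφ₂_def]; ring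
    rw [smul_eq_mul, hf_def]
    simp only []
    rw [hbase, Real.mul_rpow (by positivity) (by nlinarith : (0:ℝ) ≤ v*(1-v)),
      Real.mul_rpow hv0.le (by linarith : (0:ℝ) ≤ 1 - v)]
    rw [abs_of_pos (by positivity : (0:ℝ) < 2*c)]
    have h2c : (((2*c)^2 : ℝ)) ^ (α-1) = (2*c) ^ (2*α-2) := by
      rw [← Real.rpow_natCast (2*c) 2, ← Real.rpow_mul (by positivity)]
      norm_num
      ring_nf
    rw [h2c]
    have hfin : (2*c) * (2*c) ^ (2*α-2) = A := by
      rw [Real.mul_rpow (by norm_num) hc.le, hA_def,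
        show (2*α-1) = 1 + (2*α-2) by ring,
        Real.rpow_add (by norm_num : (0:ℝ) < 2), Real.rpow_add hc,
        Real.rpow_one, Real.rpow_one]
      ring
    rw [← hfin]
    ring
  have hIform : ∫ w in Ioo (-c) c, f w = A * (Real.Gamma α ^ 2 / Real.Gamma (2*α)) := by
    rw [← himg2,
      integral_image_eq_integral_abs_deriv_smul measurableSet_Ioo hderiv2 hinj2 f,
      setIntegral_congr_fun measurableSet_Ioo P2, integral_const_mul, beta_eval hα]
  -- integrability transfer
  have hfint : IntegrableOn f (Ioo (-c) c) := by
    rw [← himg2,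
      integrableOn_image_iff_integrableOn_abs_deriv_smul measurableSet_Ioo hderiv2 hinj2 f]
    refine (((beta_integrable hα).const_mul A)).congr ?_
    exact (ae_restrict_iff' measurableSet_Ioo).2 (ae_of_all _ fun v hv => (P2 v hv).symm)
  have hIntBig : IntegrableOn (fun r => |1 + s*t/r^2| • f (φ r)) (Ioo t s) := by
    rw [← integrableOn_image_iff_integrableOn_abs_deriv_smul measurableSet_Ioo hφderiv hφinj f]
    rwa [hφimg]
  have hbasepos : ∀ r ∈ Ioo t s, 0 < c^2 - (φ r)^2 := by
    intro r hr
    nlinarith [(hφlt r hr).1, (hφlt r hr).2]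
  have hfφcont : ContinuousOn (fun r => f (φ r)) (Ioo t s) := by
    rw [hf_def]
    refine ContinuousOn.rpow_const ?_ (fun r hr => Or.inl (hbasepos r hr).ne')
    exact (continuousOn_const.sub ((hφcont.mono Ioo_subset_Icc_self).pow 2))
  have hr2cont : ContinuousOn (fun r : ℝ => s*t/r^2) (Ioo t s) := by
    refine continuousOn_const.div (continuousOn_pow 2) (fun r hr => ?_)
    exact pow_ne_zero 2 (ht.trans hr.1).ne'
  have hnonneg : ∀ r ∈ Ioo t s, 0 ≤ f (φ r) := by
    intro r hr
    exact Real.rpow_nonneg (hbasepos r hr).le _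
  have hfactpos : ∀ r ∈ Ioo t s, (0:ℝ) < s*t/r^2 := by
    intro r hr
    have : 0 < r := ht.trans hr.1
    positivity
  have hg1 : IntegrableOn (fun r => f (φ r)) (Ioo t s) := by
    refine hIntBig.mono' (hfφcont.aestronglyMeasurable measurableSet_Ioo) ?_
    refine (ae_restrict_iff' measurableSet_Ioo).2 (ae_of_all _ fun r hr => ?_)
    rw [Real.norm_eq_abs, abs_of_nonneg (hnonneg r hr), smul_eq_mul,
      abs_of_pos (by linarith [hfactpos r hr] : (0:ℝ) < 1 + s*t/r^2)]
    nlinarith [hnonneg r hr, hfactpos r hr]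
  have hg2 : IntegrableOn (fun r => (s*t/r^2) * f (φ r)) (Ioo t s) := by
    refine hIntBig.mono' ((hr2cont.mul hfφcont).aestronglyMeasurable measurableSet_Ioo) ?_
    refine (ae_restrict_iff' measurableSet_Ioo).2 (ae_of_all _ fun r hr => ?_)
    rw [Real.norm_eq_abs, abs_of_nonneg (mul_nonneg (hfactpos r hr).le (hnonneg r hr)),
      smul_eq_mul, abs_of_pos (by linarith [hfactpos r hr] : (0:ℝ) < 1 + s*t/r^2)]
    nlinarith [hnonneg r hr, hfactpos r hr]
  have hsum : ∫ r in Ioo t s, |1 + s*t/r^2| • f (φ r)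
      = (∫ r in Ioo t s, f (φ r)) + ∫ r in Ioo t s, (s*t/r^2) * f (φ r) := by
    rw [← integral_add hg1 hg2]
    refine setIntegral_congr_fun measurableSet_Ioo (fun r hr => ?_)
    rw [smul_eq_mul, abs_of_pos (by linarith [hfactpos r hr] : (0:ℝ) < 1 + s*t/r^2)]
    ring
  have hsum2 : ∫ w in Ioo (-c) c, f w = 2 * ∫ r in Ioo t s, (s*t/r^2) * f (φ r) := by
    rw [stepB, hsum, ← stepC]
    ring
  -- pointwise identity with the original integrand
  have P3 : ∀ r ∈ Ioo t s, (s*t/r^2) * f (φ r)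
      = s * t * ((s^2 - r^2) ^ (α-1) * (r^2 - t^2) ^ (α-1) * r ^ (-(2*α))) := by
    intro r hr
    have hr0 : 0 < r := ht.trans hr.1
    have h1 : 0 < s^2 - r^2 := by nlinarith [hr.2]
    have h2 : 0 < r^2 - t^2 := by nlinarith [hr.1]
    have hbase : c^2 - (φ r)^2 = (s^2 - r^2) * (r^2 - t^2) / r^2 := by
      rw [hφ_def, hc_def]; field_simp; ring
    rw [hf_def]
    simp only []
    rw [hbase, Real.div_rpow (by positivity) (by positivity),
      Real.mul_rpow h1.le h2.le]
    have hr2 : ((r^2 : ℝ)) ^ (α-1) = r ^ (2*α-2) := by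
      rw [← Real.rpow_natCast r 2, ← Real.rpow_mul hr0.le]
      norm_num
      ring_nf
    rw [hr2]
    have e1 : r ^ (-(2*α)) = (r ^ (2*α-2) * r^2)⁻¹ := by
      rw [← Real.rpow_natCast r 2, ← Real.rpow_add hr0, Real.rpow_neg hr0.le]
      norm_num
    rw [e1]
    have hp1 : (0:ℝ) < r ^ (2*α-2) := Real.rpow_pos_of_pos hr0 _
    field_simp
  have hfinal : s * t * ∫ r in Ioo t s, (s ^ 2 - r ^ 2) ^ (α - 1) * (r ^ 2 - t ^ 2) ^ (α - 1)
        * r ^ (-(2 * α)) = ∫ r in Ioo t s, (s*t/r^2) * f (φ r) := by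
    rw [← integral_const_mul]
    exact setIntegral_congr_fun measurableSet_Ioo (fun r hr => (P3 r hr).symm)
  rw [hfinal]
  have : ∫ r in Ioo t s, (s*t/r^2) * f (φ r)
      = A * (Real.Gamma α ^ 2 / Real.Gamma (2*α)) / 2 := by
    rw [← hIform, hsum2]; ring
  rw [this, hA_def]
  have h2pow : (2:ℝ) ^ (2*α-1) = 2 * 2 ^ (2*α-2) := by
    rw [show (2*α-1) = 1 + (2*α-2) by ring, Real.rpow_add (by norm_num : (0:ℝ) < 2),
      Real.rpow_one]
  rw [h2pow, hc_def]
  have hG : Real.Gamma (2*α) ≠ 0 := (Real.Gamma_pos_of_pos (by linarith)).ne'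
  field_simp
end

section
/- Let f be a continuous function on ℍⁿ with f(x) = O(x_{n+1}^{-μ}) where μ > k−1, and 1 ≤ k ≤ n−1. Then the totally geodesic Radon transform (Rf)(ξ) is finite for every k-dimensional totally geodesic submanifold ξ ⊂ ℍⁿ. The key geometric ingredient: if x_ξ is the point of ξ closest to the origin x₀ and x ∈ ξ, then cosh d(x₀,x) = cosh d(x₀,x_ξ)·cosh d(x_ξ,x), so |(Rf)(ξ)| ≤ c·(cosh d(x₀,x_ξ))^{-μ}·σ_{k-1} ∫₁^∞ (s²−1)^{k/2−1} s^{-μ} ds, which is finite for μ > k−1. -/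
open MeasureTheory Real Set Matrix

/-- The Minkowski bilinear form `[x,y] = x_{n+1} y_{n+1} - x₁y₁ - ⋯ - xₙyₙ` on `ℝ^{n+1}`
(the time coordinate being the last one). -/
noncomputable def mink (n : ℕ) (x y : Fin (n + 1) → ℝ) : ℝ :=
  x (Fin.last n) * y (Fin.last n) - ∑ i : Fin n, x i.castSucc * y i.castSucc

/-- The hyperboloid model of `ℍⁿ`: the upper sheet of `[x,x] = 1`. -/
def hypSet (n : ℕ) : Set (Fin (n + 1) → ℝ) :=
  {x | mink n x x = 1 ∧ 0 < x (Fin.last n)}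

/-- `A` belongs to the (orthochronous) Lorentz group `O(n,1)`: it preserves the Minkowski
form and the upper sheet. -/
def IsLorentz (n : ℕ) (A : Matrix (Fin (n + 1)) (Fin (n + 1)) ℝ) : Prop :=
  (∀ x y, mink n (A.mulVec x) (A.mulVec y) = mink n x y) ∧
    0 < (A.mulVec fun i => if (i : ℕ) = n then 1 else 0) (Fin.last n)

/-- Graph parameterization of the totally geodesic submanifold `ℍᵏ ⊂ ℍⁿ` (first `k` spatial
coordinates and the time coordinate). -/
noncomputable def hLift (k n : ℕ) (v : EuclideanSpace ℝ (Fin k)) : Fin (n + 1) → ℝ :=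
  fun i => if h : (i : ℕ) < k then v ⟨i, h⟩
    else if (i : ℕ) = n then Real.sqrt (1 + ‖v‖ ^ 2) else 0

set_option maxHeartbeats 1000000 in
/-- If `f` is continuous on `ℍⁿ` with `f(x) = O(x_{n+1}^{-μ})`, `μ > k - 1`, then the totally
geodesic Radon transform `(Rf)(ξ) = ∫_ξ f` is finite (converges absolutely) for *every*
`k`-dimensional totally geodesic submanifold `ξ = A·ℍᵏ`, `A` in the Lorentz group; the
intrinsic measure on `ℍᵏ` is `dv/√(1+|v|²)` in graph coordinates. -/
theorem hyperbolic_radon_Cmu_existence (n k : ℕ) (hk1 : 1 ≤ k) (hkn : k ≤ n - 1)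
    (μ : ℝ) (hμ : (k : ℝ) - 1 < μ)
    (f : (Fin (n + 1) → ℝ) → ℝ)
    (hcont : ContinuousOn f (hypSet n))
    (hbound : ∃ C : ℝ, ∀ x ∈ hypSet n, |f x| ≤ C * (x (Fin.last n)) ^ (-μ)) :
    ∀ A : Matrix (Fin (n + 1)) (Fin (n + 1)) ℝ, IsLorentz n A →
      Integrable (fun v : EuclideanSpace ℝ (Fin k) =>
        f (A.mulVec (hLift k n v)) / Real.sqrt (1 + ‖v‖ ^ 2)) := by
  intro A hA
  have hknn : k < n := by omega
  -- the metric coefficients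
  set d : Fin (n + 1) → ℝ := fun i => if (i : ℕ) = n then 1 else -1 with hd_def
  have hd_cast : ∀ i : Fin n, d i.castSucc = -1 := by
    intro i
    simp only [hd_def, Fin.coe_castSucc]
    exact if_neg (Nat.ne_of_lt i.isLt)
  have hd_last : d (Fin.last n) = 1 := by simp [hd_def]
  have hmink_eq : ∀ x y : Fin (n + 1) → ℝ, mink n x y = ∑ l, x l * d l * y l := by
    intro x y
    rw [Fin.sum_univ_castSucc, hd_last]
    have : ∑ i : Fin n, x i.castSucc * d i.castSucc * y i.castSucc
        = -∑ i : Fin n, x i.castSucc * y i.castSucc := by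
      rw [← Finset.sum_neg_distrib]
      exact Finset.sum_congr rfl fun i _ => by rw [hd_cast]; ring
    rw [this, mink]; ring
  set G : Matrix (Fin (n + 1)) (Fin (n + 1)) ℝ := Matrix.diagonal d with hG_def
  have hGG : G * G = 1 := by
    rw [hG_def, Matrix.diagonal_mul_diagonal]
    have : (fun i => d i * d i) = fun _ : Fin (n+1) => (1:ℝ) := by
      funext i; simp only [hd_def]; split_ifs <;> norm_num
    rw [this, Matrix.diagonal_one]
  have hMG : ∀ (M N : Matrix (Fin (n+1)) (Fin (n+1)) ℝ) (i j : Fin (n+1)),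
      (M * G * N) i j = ∑ l, M i l * d l * N l j := by
    intro M N i j
    rw [Matrix.mul_apply]
    refine Finset.sum_congr rfl fun l _ => ?_
    rw [hG_def, Matrix.mul_diagonal]
  have hATGA : Aᵀ * G * A = G := by
    ext i j
    have h1 := hA.1 (Pi.single i 1) (Pi.single j 1)
    rw [Matrix.mulVec_single, Matrix.mulVec_single, hmink_eq, hmink_eq] at h1
    simp only [MulOpposite.op_one, one_smul, Matrix.col_apply] at h1
    have h2 : ∑ l, (Pi.single i 1 : Fin (n+1) → ℝ) l * d l * (Pi.single j 1 : Fin (n+1) → ℝ) l = G i j := by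
      rw [hG_def, Matrix.diagonal_apply]
      rcases eq_or_ne i j with rfl | hij
      · rw [if_pos rfl, Finset.sum_eq_single i]
        · simp
        · intro l _ hl; simp [Pi.single_apply, hl]
        · simp
      · rw [if_neg hij, Finset.sum_eq_zero]
        intro l _
        simp only [Pi.single_apply]
        split_ifs with h1 h2
        · exact absurd (h1.symm.trans h2) hij
        all_goals ring
    rw [h2] at h1
    rw [← h1, hMG]
    exact Finset.sum_congr rfl fun l _ => by rw [Matrix.transpose_apply]
  have hBA : (G * Aᵀ * G) * A = 1 := by
    have : (G * Aᵀ * G) * A = G * (Aᵀ * G * A) := by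
      simp only [Matrix.mul_assoc]
    rw [this, hATGA, hGG]
  have hAB : A * (G * Aᵀ * G) = 1 := mul_eq_one_comm.mp hBA
  have hAGAT : A * G * Aᵀ = G := by
    calc A * G * Aᵀ = A * G * Aᵀ * (G * G) := by rw [hGG, Matrix.mul_one]
      _ = (A * (G * Aᵀ * G)) * G := by simp only [Matrix.mul_assoc]
      _ = G := by rw [hAB, Matrix.one_mul]
  -- the last row of A
  set b : ℝ := A (Fin.last n) (Fin.last n) with hb_def
  set a : Fin n → ℝ := fun i => A (Fin.last n) i.castSucc with ha_def
  have hrow : b ^ 2 - ∑ i : Fin n, a i ^ 2 = 1 := by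
    have h1 := congrFun (congrFun hAGAT (Fin.last n)) (Fin.last n)
    have h2 : (A * G * Aᵀ) (Fin.last n) (Fin.last n)
        = ∑ l, A (Fin.last n) l * d l * A (Fin.last n) l := by
      rw [hMG]
      exact Finset.sum_congr rfl fun l _ => by rw [Matrix.transpose_apply]
    have h3 : G (Fin.last n) (Fin.last n) = 1 := by
      simp [hG_def, Matrix.diagonal_apply, hd_last]
    rw [h2, h3] at h1
    rw [Fin.sum_univ_castSucc, hd_last] at h1
    have h4 : ∑ i : Fin n, A (Fin.last n) i.castSucc * d i.castSucc * A (Fin.last n) i.castSucc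
        = -∑ i : Fin n, a i ^ 2 := by
      rw [← Finset.sum_neg_distrib]
      exact Finset.sum_congr rfl fun i _ => by rw [hd_cast, ha_def]; ring
    rw [h4] at h1
    rw [← h1, hb_def]; ring
  have hb_pos : 0 < b := by
    have h1 := hA.2
    have h2 : (A.mulVec fun i => if (i : ℕ) = n then (1:ℝ) else 0) (Fin.last n) = b := by
      simp only [Matrix.mulVec, dotProduct]
      rw [Finset.sum_eq_single (Fin.last n)]
      · simp [hb_def]
      · intro l _ hl
        rw [if_neg, mul_zero]
        intro h; exact hl (Fin.ext h)
      · simp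
    rwa [h2] at h1
  set S : ℝ := Real.sqrt (∑ i : Fin n, a i ^ 2) with hS_def
  have hS0 : 0 ≤ S := Real.sqrt_nonneg _
  have hS2 : S ^ 2 = ∑ i : Fin n, a i ^ 2 :=
    Real.sq_sqrt (Finset.sum_nonneg fun i _ => sq_nonneg _)
  set c : ℝ := b - S with hc_def
  have hc : 0 < c := by
    have hbS : b ^ 2 = 1 + S ^ 2 := by rw [hS2]; linarith [hrow]
    nlinarith [hb_pos, hS0]
  -- coordinates of the lift
  have hx_last : ∀ v : EuclideanSpace ℝ (Fin k),
      hLift k n v (Fin.last n) = Real.sqrt (1 + ‖v‖ ^ 2) := by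
    intro v
    simp only [hLift, Fin.val_last]
    rw [dif_neg (by omega), if_pos trivial]
  have hx_cast : ∀ (v : EuclideanSpace ℝ (Fin k)) (i : Fin n),
      hLift k n v i.castSucc = if h : (i : ℕ) < k then v ⟨i, h⟩ else 0 := by
    intro v i
    simp only [hLift, Fin.coe_castSucc]
    by_cases h : (i : ℕ) < k
    · rw [dif_pos h, dif_pos h]
    · rw [dif_neg h, dif_neg h, if_neg (Nat.ne_of_lt i.isLt)]
  -- sum of squares of the spatial coordinates of the lift
  have hxl_sq : ∀ v : EuclideanSpace ℝ (Fin k),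
      ∑ i : Fin n, hLift k n v i.castSucc ^ 2 = ‖v‖ ^ 2 := by
    intro v
    have hnorm : ‖v‖ ^ 2 = ∑ j : Fin k, v j ^ 2 := by
      rw [EuclideanSpace.norm_eq, Real.sq_sqrt (Finset.sum_nonneg fun j _ => sq_nonneg _)]
      exact Finset.sum_congr rfl fun j _ => by rw [Real.norm_eq_abs, sq_abs]
    set F : ℕ → ℝ := fun i => if h : i < k then v ⟨i, h⟩ ^ 2 else 0 with hF_def
    have h1 : ∀ i : Fin n, hLift k n v i.castSucc ^ 2 = F (i : ℕ) := by
      intro i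
      rw [hx_cast, hF_def]
      by_cases h : (i : ℕ) < k
      · rw [dif_pos h]; simp only [dif_pos h]
      · rw [dif_neg h]; simp only [dif_neg h]; norm_num
    calc ∑ i : Fin n, hLift k n v i.castSucc ^ 2 = ∑ i : Fin n, F (i : ℕ) :=
          Finset.sum_congr rfl fun i _ => h1 i
      _ = ∑ i ∈ Finset.range n, F i := Fin.sum_univ_eq_sum_range F n
      _ = ∑ i ∈ Finset.range k, F i :=
          (Finset.sum_subset (Finset.range_subset_range.2 hknn.le)
            (fun x _ hx => dif_neg (by simpa using hx))).symm
      _ = ∑ j : Fin k, F (j : ℕ) := (Fin.sum_univ_eq_sum_range F k).symm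
      _ = ‖v‖ ^ 2 := by
          rw [hnorm]
          refine Finset.sum_congr rfl fun j _ => ?_
          rw [hF_def]; simp only [dif_pos j.isLt, Fin.eta]
  -- the time coordinate of A ∘ lift
  set t : EuclideanSpace ℝ (Fin k) → ℝ := fun v => Real.sqrt (1 + ‖v‖ ^ 2) with ht_def
  set g : EuclideanSpace ℝ (Fin k) → ℝ :=
    fun v => (A.mulVec (hLift k n v)) (Fin.last n) with hg_def
  have ht_pos : ∀ v, 0 < t v := fun v =>
    Real.sqrt_pos.2 (by positivity)
  have ht_one : ∀ v, 1 ≤ t v := by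
    intro v
    have := Real.sqrt_le_sqrt (show (1:ℝ) ≤ 1 + ‖v‖ ^ 2 by nlinarith [sq_nonneg ‖v‖])
    rwa [Real.sqrt_one] at this
  have hvt : ∀ v, ‖v‖ ≤ t v := by
    intro v
    rw [ht_def, ← Real.sqrt_sq (norm_nonneg v)]
    exact Real.sqrt_le_sqrt (by linarith)
  have hg_eq : ∀ v, g v = (∑ i : Fin n, a i * hLift k n v i.castSucc) + b * t v := by
    intro v
    rw [hg_def]
    simp only [Matrix.mulVec, dotProduct]
    rw [Fin.sum_univ_castSucc, hx_last, hb_def, ht_def, ha_def]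
  have hT : ∀ v, |∑ i : Fin n, a i * hLift k n v i.castSucc| ≤ S * ‖v‖ := by
    intro v
    have hcs := Finset.sum_mul_sq_le_sq_mul_sq Finset.univ a
      (fun i => hLift k n v i.castSucc)
    rw [hxl_sq v] at hcs
    have h2 : (S * ‖v‖) ^ 2 = (∑ i : Fin n, a i ^ 2) * ‖v‖ ^ 2 := by
      rw [mul_pow, hS2]
    have h3 : |∑ i : Fin n, a i * hLift k n v i.castSucc| ^ 2 ≤ (S * ‖v‖) ^ 2 := by
      rw [sq_abs, h2]; exact hcs
    have h4 : 0 ≤ S * ‖v‖ := mul_nonneg hS0 (norm_nonneg v)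
    nlinarith [h3, h4, abs_nonneg (∑ i : Fin n, a i * hLift k n v i.castSucc)]
  have hgc : ∀ v, c * t v ≤ g v := by
    intro v
    have h1 := hT v
    have h2 : -(S * ‖v‖) ≤ ∑ i : Fin n, a i * hLift k n v i.castSucc :=
      neg_le_of_abs_le h1 |>.trans_eq rfl
    have h3 : S * ‖v‖ ≤ S * t v := mul_le_mul_of_nonneg_left (hvt v) hS0
    rw [hg_eq v, hc_def]
    nlinarith
  have hg_pos : ∀ v, 0 < g v := fun v =>
    lt_of_lt_of_le (mul_pos hc (ht_pos v)) (hgc v)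
  -- membership of the transformed lift in the hyperboloid
  have hmem : ∀ v : EuclideanSpace ℝ (Fin k), A.mulVec (hLift k n v) ∈ hypSet n := by
    intro v
    constructor
    · rw [hA.1]
      have h1 : mink n (hLift k n v) (hLift k n v)
          = t v * t v - ∑ i : Fin n, hLift k n v i.castSucc ^ 2 := by
        rw [mink, hx_last, ht_def]
        congr 1
        exact Finset.sum_congr rfl fun i _ => (sq _).symm
      rw [h1, hxl_sq v]
      show Real.sqrt (1 + ‖v‖ ^ 2) * Real.sqrt (1 + ‖v‖ ^ 2) - ‖v‖ ^ 2 = 1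
      rw [Real.mul_self_sqrt (by positivity)]
      ring
    · exact hg_pos v
  -- continuity
  have hLift_cont : Continuous fun v : EuclideanSpace ℝ (Fin k) => hLift k n v := by
    apply continuous_pi
    intro i
    simp only [hLift]
    by_cases h1 : (i : ℕ) < k
    · simp only [dif_pos h1]
      exact (EuclideanSpace.proj (⟨(i : ℕ), h1⟩ : Fin k)).continuous
    · simp only [dif_neg h1]
      by_cases h2 : (i : ℕ) = n
      · simp only [if_pos h2]
        exact Real.continuous_sqrt.comp (continuous_const.add (continuous_norm.pow 2))
      · simp only [if_neg h2]
        exact continuous_const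
  have hy_cont : Continuous fun v : EuclideanSpace ℝ (Fin k) => A.mulVec (hLift k n v) := by
    apply continuous_pi
    intro j
    simp only [Matrix.mulVec, dotProduct]
    exact continuous_finset_sum _ fun l _ =>
      continuous_const.mul ((continuous_apply l).comp hLift_cont)
  have hfy_cont : Continuous fun v : EuclideanSpace ℝ (Fin k) =>
      f (A.mulVec (hLift k n v)) :=
    hcont.comp_continuous hy_cont hmem
  have ht_cont : Continuous t :=
    Real.continuous_sqrt.comp (continuous_const.add (continuous_norm.pow 2))
  have hint_cont : Continuous fun v : EuclideanSpace ℝ (Fin k) =>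
      f (A.mulVec (hLift k n v)) / Real.sqrt (1 + ‖v‖ ^ 2) :=
    hfy_cont.div ht_cont fun v => (ht_pos v).ne'
  -- the bound
  obtain ⟨C, hC⟩ := hbound
  have hμ0 : 0 < μ + 1 := by
    have : (0:ℝ) ≤ (k:ℝ) - 1 := by
      have : (1:ℝ) ≤ (k:ℝ) := by exact_mod_cast hk1
      linarith
    linarith
  set D : ℝ := |C| * c ^ (-μ) * Real.sqrt 2 ^ (μ + 1) with hD_def
  have hint_bound : Integrable (fun v : EuclideanSpace ℝ (Fin k) =>
      D * (1 + ‖v‖) ^ (-(μ + 1))) := by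
    apply Integrable.const_mul
    apply integrable_one_add_norm
    rw [finrank_euclideanSpace_fin]
    linarith
  apply hint_bound.mono' hint_cont.aestronglyMeasurable
  refine Filter.Eventually.of_forall fun v => ?_
  have hμnn : 0 ≤ μ := by
    have h1 : (1:ℝ) ≤ (k:ℝ) := by exact_mod_cast hk1
    linarith
  have hy := hC (A.mulVec (hLift k n v)) (hmem v)
  have hgv : (A.mulVec (hLift k n v)) (Fin.last n) = g v := rfl
  rw [hgv] at hy
  have hstep1 : |f (A.mulVec (hLift k n v))| ≤ |C| * g v ^ (-μ) :=
    hy.trans (mul_le_mul_of_nonneg_right (le_abs_self C)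
      (Real.rpow_pos_of_pos (hg_pos v) _).le)
  have hstep2 : g v ^ (-μ) ≤ (c * t v) ^ (-μ) :=
    Real.rpow_le_rpow_of_nonpos (mul_pos hc (ht_pos v)) (hgc v) (by linarith)
  have htpow : t v ^ (-μ) / t v = t v ^ (-(μ + 1)) := by
    have h1 : t v ^ (-(μ + 1)) = t v ^ (-μ) * t v ^ (-1 : ℝ) := by
      rw [← Real.rpow_add (ht_pos v)]; ring_nf
    rw [h1, Real.rpow_neg_one, div_eq_mul_inv]
  have h2t : 1 + ‖v‖ ≤ Real.sqrt 2 * t v := by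
    have h1 : (1 + ‖v‖) ^ 2 ≤ 2 * (1 + ‖v‖ ^ 2) := by nlinarith [sq_nonneg (1 - ‖v‖)]
    have h2 : Real.sqrt 2 * t v = Real.sqrt (2 * (1 + ‖v‖ ^ 2)) := by
      show Real.sqrt 2 * Real.sqrt (1 + ‖v‖ ^ 2) = _
      rw [← Real.sqrt_mul (by norm_num : (0:ℝ) ≤ 2)]
    rw [h2, ← Real.sqrt_sq (by positivity : (0:ℝ) ≤ 1 + ‖v‖)]
    exact Real.sqrt_le_sqrt h1
  have hstep4 : t v ^ (-(μ + 1)) ≤ Real.sqrt 2 ^ (μ + 1) * (1 + ‖v‖) ^ (-(μ + 1)) := by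
    have hp : (0:ℝ) < (1 + ‖v‖) ^ (μ + 1) := Real.rpow_pos_of_pos (by positivity) _
    have hq : (0:ℝ) < t v ^ (μ + 1) := Real.rpow_pos_of_pos (ht_pos v) _
    have h4 : (1 + ‖v‖) ^ (μ + 1) ≤ Real.sqrt 2 ^ (μ + 1) * t v ^ (μ + 1) := by
      rw [← Real.mul_rpow (Real.sqrt_nonneg 2) (ht_pos v).le]
      exact Real.rpow_le_rpow (by positivity) h2t hμ0.le
    rw [Real.rpow_neg (ht_pos v).le, Real.rpow_neg (by positivity : (0:ℝ) ≤ 1 + ‖v‖)]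
    have h5 : (Real.sqrt 2 ^ (μ + 1) * t v ^ (μ + 1))⁻¹ ≤ ((1 + ‖v‖) ^ (μ + 1))⁻¹ :=
      inv_anti₀ hp h4
    have hs : (0:ℝ) < Real.sqrt 2 ^ (μ + 1) :=
      Real.rpow_pos_of_pos (Real.sqrt_pos.2 (by norm_num)) _
    calc (t v ^ (μ + 1))⁻¹
        = Real.sqrt 2 ^ (μ + 1) * (Real.sqrt 2 ^ (μ + 1) * t v ^ (μ + 1))⁻¹ := by
          rw [mul_inv, ← mul_assoc, mul_inv_cancel₀ hs.ne', one_mul]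
      _ ≤ Real.sqrt 2 ^ (μ + 1) * ((1 + ‖v‖) ^ (μ + 1))⁻¹ :=
          mul_le_mul_of_nonneg_left h5 hs.le
  have habs : |Real.sqrt (1 + ‖v‖ ^ 2)| = t v := abs_of_pos (ht_pos v)
  rw [Real.norm_eq_abs, abs_div, habs]
  calc |f (A.mulVec (hLift k n v))| / t v
      ≤ (|C| * g v ^ (-μ)) / t v := (div_le_div_iff_of_pos_right (ht_pos v)).2 hstep1
    _ ≤ (|C| * (c * t v) ^ (-μ)) / t v :=
        (div_le_div_iff_of_pos_right (ht_pos v)).2 (mul_le_mul_of_nonneg_left hstep2 (abs_nonneg C))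
    _ = |C| * c ^ (-μ) * (t v ^ (-μ) / t v) := by
        rw [Real.mul_rpow hc.le (ht_pos v).le]; ring
    _ = |C| * c ^ (-μ) * t v ^ (-(μ + 1)) := by rw [htpow]
    _ ≤ |C| * c ^ (-μ) * (Real.sqrt 2 ^ (μ + 1) * (1 + ‖v‖) ^ (-(μ + 1))) :=
        mul_le_mul_of_nonneg_left hstep4
          (mul_nonneg (abs_nonneg C) (Real.rpow_pos_of_pos hc _).le)
    _ = D * (1 + ‖v‖) ^ (-(μ + 1)) := by rw [hD_def]; ring
end
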